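/- arXiv:2104.09363 — 5 statements merged into one kernel-verified Lean document; each statement's English description precedes it below -/
import Mathlib

section
/- For tensors A in ⊗_{k=1}^p ℝ^{m_k} and B in ⊗_{l=1}^q ℝ^{n_l}, the spectral norm of the Kronecker product satisfies ‖A⊗B‖_σ = ‖A‖_σ · ‖B‖_σ. -/
open scoped BigOperators

/-- Spectral norm of a tensor with modes indexed by a finite type `J`,
mode `j` having dimension `n j`. -/
noncomputable def specNorm {J : Type*} [Fintype J] [DecidableEq J] {n : J → ℕ}
    (T : (∀ j, Fin (n j)) → ℝ) : ℝ :=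
  sSup { r | ∃ x : ∀ j, EuclideanSpace ℝ (Fin (n j)),
    (∀ j, ‖x j‖ = 1) ∧ r = |∑ i, T i * ∏ j, x j (i j)| }

/-- Coordinates of a vector in Euclidean space are bounded by the norm. -/
lemma euclid_coord_le_norm {N : ℕ} (x : EuclideanSpace ℝ (Fin N)) (i : Fin N) :
    |x i| ≤ ‖x‖ := by
  rw [EuclideanSpace.norm_eq]
  have h1 : |x i| = Real.sqrt (‖x i‖ ^ 2) := by
    rw [Real.sqrt_sq_eq_abs]; simp
  rw [h1]
  apply Real.sqrt_le_sqrt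
  exact Finset.single_le_sum (f := fun j => ‖x j‖ ^ 2) (fun j _ => by positivity)
    (Finset.mem_univ i)

/-- The defining set of the spectral norm consists of nonnegative numbers. -/
lemma specSet_nonneg {J : Type*} [Fintype J] [DecidableEq J] {n : J → ℕ}
    (T : (∀ j, Fin (n j)) → ℝ) :
    ∀ r ∈ { r | ∃ x : ∀ j, EuclideanSpace ℝ (Fin (n j)),
      (∀ j, ‖x j‖ = 1) ∧ r = |∑ i, T i * ∏ j, x j (i j)| }, 0 ≤ r := by
  rintro r ⟨x, -, rfl⟩
  exact abs_nonneg _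

/-- The defining set of the spectral norm is bounded above. -/
lemma specSet_bddAbove {J : Type*} [Fintype J] [DecidableEq J] {n : J → ℕ}
    (T : (∀ j, Fin (n j)) → ℝ) :
    BddAbove { r | ∃ x : ∀ j, EuclideanSpace ℝ (Fin (n j)),
      (∀ j, ‖x j‖ = 1) ∧ r = |∑ i, T i * ∏ j, x j (i j)| } := by
  refine ⟨∑ i, |T i|, ?_⟩
  rintro r ⟨x, hx, rfl⟩
  calc |∑ i, T i * ∏ j, x j (i j)| ≤ ∑ i, |T i * ∏ j, x j (i j)| :=
        Finset.abs_sum_le_sum_abs _ _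
    _ ≤ ∑ i, |T i| := by
        apply Finset.sum_le_sum
        intro i _
        rw [abs_mul]
        have h : |∏ j, x j (i j)| ≤ 1 := by
          rw [Finset.abs_prod]
          calc ∏ j, |x j (i j)| ≤ ∏ j, (1 : ℝ) := by
                apply Finset.prod_le_prod (fun j _ => abs_nonneg _)
                intro j _
                calc |x j (i j)| ≤ ‖x j‖ := euclid_coord_le_norm _ _
                  _ = 1 := hx j
            _ = 1 := by simp
        calc |T i| * |∏ j, x j (i j)| ≤ |T i| * 1 :=
              mul_le_mul_of_nonneg_left h (abs_nonneg _)
          _ = |T i| := mul_one _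

/-- Supremum of a pointwise product of sets of nonnegative reals. -/
lemma sSup_image2_mul (S T : Set ℝ) (hS : ∀ a ∈ S, 0 ≤ a) (hT : ∀ b ∈ T, 0 ≤ b)
    (hSb : BddAbove S) (hTb : BddAbove T) :
    sSup (Set.image2 (· * ·) S T) = sSup S * sSup T := by
  by_cases hSne : S.Nonempty
  · by_cases hTne : T.Nonempty
    · have hS0 : 0 ≤ sSup S := by
        obtain ⟨a, ha⟩ := hSne
        exact le_trans (hS a ha) (le_csSup hSb ha)
      have hT0 : 0 ≤ sSup T := by
        obtain ⟨b, hb⟩ := hTne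
        exact le_trans (hT b hb) (le_csSup hTb hb)
      have hIb : BddAbove (Set.image2 (· * ·) S T) := by
        refine ⟨sSup S * sSup T, ?_⟩
        rintro r ⟨a, ha, b, hb, rfl⟩
        exact mul_le_mul (le_csSup hSb ha) (le_csSup hTb hb) (hT b hb) hS0
      have hIne : (Set.image2 (· * ·) S T).Nonempty := Set.Nonempty.image2 hSne hTne
      have hI0 : 0 ≤ sSup (Set.image2 (· * ·) S T) := by
        obtain ⟨a, ha⟩ := hSne
        obtain ⟨b, hb⟩ := hTne
        exact le_trans (mul_nonneg (hS a ha) (hT b hb))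
          (le_csSup hIb (Set.mem_image2_of_mem ha hb))
      apply le_antisymm
      · apply csSup_le hIne
        rintro r ⟨a, ha, b, hb, rfl⟩
        exact mul_le_mul (le_csSup hSb ha) (le_csSup hTb hb) (hT b hb) hS0
      · -- key step: ∀ a ∈ S, a * sSup T ≤ sSup (image2)
        have key : ∀ a ∈ S, a * sSup T ≤ sSup (Set.image2 (· * ·) S T) := by
          intro a ha
          rcases lt_or_eq_of_le (hS a ha) with hpos | hzero
          · rw [← le_div_iff₀' hpos]
            apply csSup_le hTne
            intro b hb
            rw [le_div_iff₀' hpos]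
            exact le_csSup hIb (Set.mem_image2_of_mem ha hb)
          · rw [← hzero, zero_mul]; exact hI0
        rcases lt_or_eq_of_le hT0 with hpos | hzero
        · rw [← le_div_iff₀ hpos]
          apply csSup_le hSne
          intro a ha
          rw [le_div_iff₀ hpos]
          exact key a ha
        · rw [← hzero, mul_zero]; exact hI0
    · rw [Set.not_nonempty_iff_eq_empty] at hTne
      subst hTne
      simp [Real.sSup_empty]
  · rw [Set.not_nonempty_iff_eq_empty] at hSne
    subst hSne
    simp [Real.sSup_empty]

/-- The bilinear form of a Kronecker product factors. -/
lemma kron_sum_factor {p q : ℕ} {m : Fin p → ℕ} {n : Fin q → ℕ}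
    (A : (∀ k, Fin (m k)) → ℝ) (B : (∀ l, Fin (n l)) → ℝ)
    (x : ∀ j : Fin p ⊕ Fin q, EuclideanSpace ℝ (Fin (Sum.elim m n j))) :
    ∑ i : ∀ j : Fin p ⊕ Fin q, Fin (Sum.elim m n j),
        (A (fun k => i (Sum.inl k)) * B (fun l => i (Sum.inr l))) * ∏ j, x j (i j)
      = (∑ iA, A iA * ∏ k, x (Sum.inl k) (iA k))
        * (∑ iB, B iB * ∏ l, x (Sum.inr l) (iB l)) := by
  rw [Finset.sum_mul_sum, ← Fintype.sum_prod_type']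
  apply Fintype.sum_equiv (Equiv.sumPiEquivProdPi (fun j => Fin (Sum.elim m n j)))
  intro i
  simp only [Equiv.sumPiEquivProdPi_apply]
  have h3 : (∏ j, x j (i j))
      = (∏ k, x (Sum.inl k) (i (Sum.inl k))) * ∏ l, x (Sum.inr l) (i (Sum.inr l)) :=
    Fintype.prod_sum_type _
  rw [h3]
  ring

set_option maxHeartbeats 1000000 in
/-- The spectral norm of the Kronecker product of two tensors equals
the product of their spectral norms. -/
theorem specNorm_kron {p q : ℕ} {m : Fin p → ℕ} {n : Fin q → ℕ}
    (A : (∀ k, Fin (m k)) → ℝ) (B : (∀ l, Fin (n l)) → ℝ) :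
    specNorm (n := Sum.elim m n)
      (fun i : ∀ j : Fin p ⊕ Fin q, Fin (Sum.elim m n j) =>
        A (fun k => i (Sum.inl k)) * B (fun l => i (Sum.inr l)))
      = specNorm A * specNorm B := by
  simp only [specNorm]
  have hset : { r | ∃ x : ∀ j : Fin p ⊕ Fin q, EuclideanSpace ℝ (Fin (Sum.elim m n j)),
      (∀ j, ‖x j‖ = 1) ∧ r = |∑ i : ∀ j : Fin p ⊕ Fin q, Fin (Sum.elim m n j),
        (A (fun k => i (Sum.inl k)) * B (fun l => i (Sum.inr l))) * ∏ j, x j (i j)| }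
      = Set.image2 (· * ·)
          { r | ∃ x : ∀ k, EuclideanSpace ℝ (Fin (m k)),
            (∀ k, ‖x k‖ = 1) ∧ r = |∑ i, A i * ∏ k, x k (i k)| }
          { r | ∃ x : ∀ l, EuclideanSpace ℝ (Fin (n l)),
            (∀ l, ‖x l‖ = 1) ∧ r = |∑ i, B i * ∏ l, x l (i l)| } := by
    ext r
    constructor
    · rintro ⟨x, hx, rfl⟩
      refine ⟨|∑ iA, A iA * ∏ k, x (Sum.inl k) (iA k)|,
        ⟨fun k => x (Sum.inl k), fun k => hx (Sum.inl k), rfl⟩,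
        |∑ iB, B iB * ∏ l, x (Sum.inr l) (iB l)|,
        ⟨fun l => x (Sum.inr l), fun l => hx (Sum.inr l), rfl⟩, ?_⟩
      exact (abs_mul _ _).symm.trans (congrArg abs (kron_sum_factor A B x).symm)
    · rintro ⟨a, ⟨xA, hxA, rfl⟩, b, ⟨xB, hxB, rfl⟩, rfl⟩
      refine ⟨fun j => (Sum.rec xA xB j :
          EuclideanSpace ℝ (Fin (Sum.elim m n j))), ?_, ?_⟩
      · rintro (k | l)
        · exact hxA k
        · exact hxB l
      · show |∑ i, A i * ∏ k, xA k (i k)| * |∑ i, B i * ∏ l, xB l (i l)| = _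
        rw [kron_sum_factor A B (fun j => Sum.rec xA xB j), abs_mul]
  rw [hset]
  exact sSup_image2_mul _ _ (specSet_nonneg A) (specSet_nonneg B)
    (specSet_bddAbove A) (specSet_bddAbove B)
end

section
/- For a homogeneous polynomial f of degree p in n real variables and any c ∈ ℝ^n, |f(c)| ≤ ‖f‖_HS · ‖c‖₂^p; moreover for c ≠ 0, equality holds if and only if f(x) = a(cᵀx)^p for some a ∈ ℝ. -/
open scoped BigOperators
open MvPolynomial

/-- The Bombieri (Hilbert–Schmidt) norm of a homogeneous polynomial of degree `p`:
`‖f‖_HS² = ∑ (p!/(j₁!⋯jₙ!)) φ_j²`, where `f = ∑ (p!/(j₁!⋯jₙ!)) φ_j x^j`; equivalently,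
in terms of the monomial coefficients of `f`,
`‖f‖_HS² = ∑_d (∏ᵢ (dᵢ)! / p!) (coeff d f)²`. -/
noncomputable def bombieriNorm {n : ℕ} (p : ℕ) (f : MvPolynomial (Fin n) ℝ) : ℝ :=
  Real.sqrt (∑ d ∈ f.support,
    ((∏ i, (Nat.factorial (d i) : ℝ)) / (Nat.factorial p : ℝ)) * (f.coeff d) ^ 2)

/-- The `p`-th power of the linear form `x ↦ cᵀx`, as a polynomial. -/
noncomputable def linPow {n : ℕ} (c : Fin n → ℝ) (p : ℕ) : MvPolynomial (Fin n) ℝ :=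
  (∑ i, MvPolynomial.C (c i) * MvPolynomial.X i) ^ p


/-- The spectral (sigma) norm of a polynomial: the sup of `|f(x)|` over the unit sphere. -/
noncomputable def sigmaNorm {n : ℕ} (f : MvPolynomial (Fin n) ℝ) : ℝ :=
  sSup { r | ∃ x : EuclideanSpace ℝ (Fin n), ‖x‖ = 1 ∧
    r = |MvPolynomial.eval (fun i => x i) f| }

open scoped RealInnerProductSpace

lemma prod_X_pow (n : ℕ) (d : Fin n →₀ ℕ) :
    (∏ i, (MvPolynomial.X i : MvPolynomial (Fin n) ℝ) ^ d i) = monomial d 1 := by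
  rw [← MvPolynomial.prod_X_pow_eq_monomial]
  exact (Finset.prod_subset (Finset.subset_univ _) (by
    intro i _ hi
    simp [Finsupp.notMem_support_iff.mp hi])).symm

lemma coeff_linPow {n p : ℕ} (c : Fin n → ℝ) (d : Fin n →₀ ℕ) :
    MvPolynomial.coeff d (linPow c p) =
      if (∑ i, d i) = p then (Nat.multinomial Finset.univ d : ℝ) * ∏ i, c i ^ d i else 0 := by
  classical
  rw [linPow, Finset.sum_pow_eq_sum_piAntidiag, MvPolynomial.coeff_sum]
  have hterm : ∀ k : Fin n → ℕ,
      MvPolynomial.coeff d ((Nat.multinomial Finset.univ k : MvPolynomial (Fin n) ℝ) *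
        ∏ i, (MvPolynomial.C (c i) * MvPolynomial.X i) ^ k i) =
      if k = ⇑d then (Nat.multinomial Finset.univ d : ℝ) * ∏ i, c i ^ d i else 0 := by
    intro k
    have h1 : (∏ i, (MvPolynomial.C (c i) * MvPolynomial.X i) ^ k i) =
        MvPolynomial.C (∏ i, c i ^ k i) *
          ∏ i, (MvPolynomial.X i : MvPolynomial (Fin n) ℝ) ^ k i := by
      rw [map_prod, ← Finset.prod_mul_distrib]
      exact Finset.prod_congr rfl fun i _ => by rw [mul_pow, map_pow]
    by_cases hk : k = ⇑d
    · subst hk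
      rw [h1, prod_X_pow, if_pos rfl, ← map_natCast (MvPolynomial.C (σ := Fin n) (R := ℝ)),
        ← mul_assoc, ← map_mul, MvPolynomial.coeff_C_mul, MvPolynomial.coeff_monomial,
        if_pos rfl, mul_one, mul_comm]
    · rw [h1]
      have h2 : (∏ i, (MvPolynomial.X i : MvPolynomial (Fin n) ℝ) ^ k i) =
          monomial (Finsupp.equivFunOnFinite.symm k) 1 := by
        have := prod_X_pow n (Finsupp.equivFunOnFinite.symm k)
        simpa using this
      rw [h2, if_neg hk, ← map_natCast (MvPolynomial.C (σ := Fin n) (R := ℝ)),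
        ← mul_assoc, ← map_mul, MvPolynomial.coeff_C_mul, MvPolynomial.coeff_monomial,
        if_neg (by
          intro h
          exact hk (by
            have := congrArg Finsupp.equivFunOnFinite h
            simp at this; exact this)), mul_zero]
  rw [Finset.sum_congr rfl fun k _ => hterm k,
    Finset.sum_ite_eq' (Finset.piAntidiag Finset.univ p) (⇑d)]
  simp [Finset.mem_piAntidiag]

lemma sum_univ_eq_degree {n : ℕ} (d : Fin n →₀ ℕ) : (∑ i, d i) = d.degree :=
  (Finset.sum_subset (Finset.subset_univ _)
    (fun i _ hi => Finsupp.notMem_support_iff.mp hi)).symm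

/-- `|f(c)| ≤ ‖f‖_HS ‖c‖₂^p` for homogeneous `f` of degree `p`; for
`c ≠ 0` equality holds iff `f(x) = a (cᵀx)^p` for some `a ∈ ℝ`. -/
theorem abs_eval_le_bombieriNorm {n p : ℕ}
    (f : MvPolynomial (Fin n) ℝ) (hf : f.IsHomogeneous p)
    (c : EuclideanSpace ℝ (Fin n)) :
    |MvPolynomial.eval (fun i => c i) f| ≤ bombieriNorm p f * ‖c‖ ^ p ∧
      (c ≠ 0 →
        (|MvPolynomial.eval (fun i => c i) f| = bombieriNorm p f * ‖c‖ ^ p ↔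
          ∃ a : ℝ, f = MvPolynomial.C a * linPow (fun i => c i) p)) := by
  classical
  set L : MvPolynomial (Fin n) ℝ := linPow (fun i => c i) p with hLdef
  set S : Finset (Fin n →₀ ℕ) := f.support ∪ L.support with hS
  set w : (Fin n →₀ ℕ) → ℝ := fun d => (∏ i, ((d i).factorial : ℝ)) / (p.factorial : ℝ)
    with hw
  have hwpos : ∀ d, 0 < w d := fun d => by
    apply div_pos (Finset.prod_pos fun i _ => by exact_mod_cast (d i).factorial_pos)
    exact_mod_cast p.factorial_pos
  have hsq : ∀ d, Real.sqrt (w d) * Real.sqrt (w d) = w d :=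
    fun d => Real.mul_self_sqrt (hwpos d).le
  have hsne : ∀ d, Real.sqrt (w d) ≠ 0 := fun d => by
    positivity
  have hLdeg : ∀ d ∈ L.support, (∑ i, d i) = p := fun d hd => by
    by_contra h
    exact (MvPolynomial.mem_support_iff.mp hd) (by rw [hLdef, coeff_linPow, if_neg h])
  have hfdeg : ∀ d ∈ f.support, (∑ i, d i) = p := fun d hd => by
    rw [sum_univ_eq_degree]
    by_contra h
    exact (MvPolynomial.mem_support_iff.mp hd) (hf.coeff_eq_zero h)
  have hkey : ∀ d, (∑ i, d i) = p → w d * L.coeff d = ∏ i, (c i) ^ d i := fun d hd => by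
    rw [hLdef, coeff_linPow, if_pos hd, ← mul_assoc]
    have hspec := Nat.multinomial_spec Finset.univ ⇑d
    rw [hd] at hspec
    have : (w d) * (Nat.multinomial Finset.univ ⇑d : ℝ) = 1 := by
      rw [hw]
      field_simp
      exact_mod_cast hspec
    rw [this, one_mul]
  set u : EuclideanSpace ℝ S := WithLp.toLp 2 (fun d : S => Real.sqrt (w d.1) * f.coeff d.1) with hu
  set v : EuclideanSpace ℝ S := WithLp.toLp 2 (fun d : S => Real.sqrt (w d.1) * L.coeff d.1) with hv
  -- inner product equals evaluation
  have hinner : (inner ℝ u v : ℝ) = MvPolynomial.eval (fun i => c i) f := by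
    rw [PiLp.inner_apply]
    simp only [RCLike.inner_apply, conj_trivial, hu, hv, PiLp.toLp_apply]
    have h1 : ∀ d : S, (Real.sqrt (w d.1) * f.coeff d.1) * (Real.sqrt (w d.1) * L.coeff d.1)
        = f.coeff d.1 * (w d.1 * L.coeff d.1) := fun d => by
      rw [mul_mul_mul_comm, hsq d.1, mul_left_comm]
    rw [Finset.sum_congr rfl fun (d : S) _ => mul_comm (Real.sqrt (w d.1) * L.coeff d.1) _]
    rw [Finset.sum_congr rfl fun d _ => h1 d]
    rw [Finset.sum_coe_sort S (fun d => f.coeff d * (w d * L.coeff d))]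
    rw [← Finset.sum_subset (Finset.subset_union_left : f.support ⊆ S)
      (fun d _ hd => by rw [MvPolynomial.notMem_support_iff.mp hd, zero_mul])]
    rw [MvPolynomial.eval_eq']
    exact Finset.sum_congr rfl fun d hd => by rw [hkey d (hfdeg d hd)]
  -- norm of u equals Bombieri norm
  have hnu : ‖u‖ = bombieriNorm p f := by
    rw [EuclideanSpace.norm_eq]
    simp only [hu, PiLp.toLp_apply, Real.norm_eq_abs, sq_abs]
    have h1 : ∀ d : S, (Real.sqrt (w d.1) * f.coeff d.1) ^ 2 = w d.1 * f.coeff d.1 ^ 2 :=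
      fun d => by rw [mul_pow, Real.sq_sqrt (hwpos d.1).le]
    rw [Finset.sum_congr rfl fun d _ => h1 d,
      Finset.sum_coe_sort S (fun d => w d * f.coeff d ^ 2),
      ← Finset.sum_subset (Finset.subset_union_left : f.support ⊆ S)
        (fun d _ hd => by rw [MvPolynomial.notMem_support_iff.mp hd]; ring)]
    rfl
  -- norm of v equals ‖c‖ ^ p
  have hnv : ‖v‖ = ‖c‖ ^ p := by
    have hvsq : ‖v‖ ^ 2 = (∑ i, (c i) ^ 2) ^ p := by
      rw [EuclideanSpace.norm_eq, Real.sq_sqrt (Finset.sum_nonneg fun d _ => by positivity)]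
      simp only [hv, PiLp.toLp_apply, Real.norm_eq_abs, sq_abs]
      have h1 : ∀ d : S, (Real.sqrt (w d.1) * L.coeff d.1) ^ 2
          = L.coeff d.1 * (w d.1 * L.coeff d.1) := fun d => by
        rw [mul_pow, Real.sq_sqrt (hwpos d.1).le]; ring
      rw [Finset.sum_congr rfl fun d _ => h1 d,
        Finset.sum_coe_sort S (fun d => L.coeff d * (w d * L.coeff d)),
        ← Finset.sum_subset (Finset.subset_union_right : L.support ⊆ S)
          (fun d _ hd => by rw [MvPolynomial.notMem_support_iff.mp hd, zero_mul])]
      have h2 : ∑ d ∈ L.support, L.coeff d * (w d * L.coeff d)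
          = MvPolynomial.eval (fun i => c i) L := by
        rw [MvPolynomial.eval_eq']
        exact Finset.sum_congr rfl fun d hd => by rw [hkey d (hLdeg d hd)]
      rw [h2, hLdef, linPow, map_pow, map_sum]
      congr 1
      exact Finset.sum_congr rfl fun i _ => by simp [sq]
    have hcsq : (‖c‖ ^ p) ^ 2 = (∑ i, (c i) ^ 2) ^ p := by
      rw [← pow_mul, mul_comm p 2, pow_mul]
      congr 1
      rw [EuclideanSpace.norm_eq, Real.sq_sqrt (Finset.sum_nonneg fun i _ => by positivity)]
      exact Finset.sum_congr rfl fun i _ => by rw [Real.norm_eq_abs, sq_abs]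
    have := hvsq.trans hcsq.symm
    calc ‖v‖ = Real.sqrt (‖v‖ ^ 2) := (Real.sqrt_sq (norm_nonneg v)).symm
      _ = Real.sqrt ((‖c‖ ^ p) ^ 2) := by rw [this]
      _ = ‖c‖ ^ p := Real.sqrt_sq (by positivity)
  -- the inequality
  have hineq : |MvPolynomial.eval (fun i => c i) f| ≤ bombieriNorm p f * ‖c‖ ^ p := by
    rw [← hinner, ← hnu, ← hnv]
    exact abs_real_inner_le_norm u v
  refine ⟨hineq, fun hc => ?_⟩
  have hvne : v ≠ 0 := by
    rw [← norm_ne_zero_iff, hnv]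
    exact pow_ne_zero _ (norm_ne_zero_iff.mpr hc)
  constructor
  · intro heq
    rw [← hinner, ← hnu, ← hnv] at heq
    have hpar : ∃ r : ℝ, u = r • v := by
      have hv0 : ‖v‖ ≠ 0 := norm_ne_zero_iff.mpr hvne
      rcases (abs_eq (by positivity)).mp heq with h | h
      · refine ⟨‖u‖ / ‖v‖, ?_⟩
        have h2 := inner_eq_norm_mul_iff_real.mp (by rw [real_inner_comm, h, mul_comm] :
          (inner ℝ v u : ℝ) = ‖v‖ * ‖u‖)
        rw [div_eq_inv_mul, mul_smul, h2, inv_smul_smul₀ hv0]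
      · refine ⟨-(‖u‖ / ‖v‖), ?_⟩
        have h3 : (inner ℝ v (-u) : ℝ) = ‖v‖ * ‖-u‖ := by
          rw [inner_neg_right, real_inner_comm, h, norm_neg]; ring
        have h2 := inner_eq_norm_mul_iff_real.mp h3
        have h2' : ‖u‖ • v = -(‖v‖ • u) := by
          rw [norm_neg] at h2; rw [h2, smul_neg]
        rw [neg_smul, div_eq_inv_mul, mul_smul, h2', smul_neg, neg_neg, inv_smul_smul₀ hv0]
    obtain ⟨r, hur⟩ := hpar
    refine ⟨r, MvPolynomial.ext _ _ fun d => ?_⟩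
    rw [MvPolynomial.coeff_C_mul]
    by_cases hd : d ∈ S
    · have h := congrArg (fun x : EuclideanSpace ℝ S => x ⟨d, hd⟩) hur
      simp only [hu, hv, PiLp.smul_apply, PiLp.toLp_apply, smul_eq_mul] at h
      have h' : Real.sqrt (w d) * f.coeff d = Real.sqrt (w d) * (r * L.coeff d) := by
        rw [h]; ring
      exact mul_left_cancel₀ (hsne d) h'
    · rw [hS, Finset.mem_union, not_or] at hd
      rw [MvPolynomial.notMem_support_iff.mp hd.1, MvPolynomial.notMem_support_iff.mp hd.2,
        mul_zero]
  · rintro ⟨a, ha⟩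
    have huv : u = a • v := by
      ext d
      simp only [hu, hv, PiLp.smul_apply, PiLp.toLp_apply, smul_eq_mul, ha, MvPolynomial.coeff_C_mul]
      ring
    rw [← hinner, ← hnu, ← hnv, huv, real_inner_smul_left, norm_smul, Real.norm_eq_abs,
      real_inner_self_eq_norm_mul_norm, abs_mul]
    rw [abs_mul, abs_norm]
    ring
end

section
/- Let f, g be homogeneous polynomials of degree p in n variables such that f has nonnegative coefficients φ_{j_1,...,j_n} majorizing the absolute values of the coefficients γ_{j_1,...,j_n} of g (i.e., φ ≥ |γ| entrywise). Then ‖f^k‖_HS ≥ ‖g^k‖_HS for every positive integer k. -/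
open scoped BigOperators
open MvPolynomial

lemma abs_coeff_pow_le {n : ℕ} (f g : MvPolynomial (Fin n) ℝ)
    (hmaj : ∀ d : Fin n →₀ ℕ, |g.coeff d| ≤ f.coeff d) :
    ∀ k : ℕ, ∀ d : Fin n →₀ ℕ, |(g ^ k).coeff d| ≤ (f ^ k).coeff d := by
  intro k
  induction k with
  | zero =>
    intro d
    simp only [pow_zero, MvPolynomial.coeff_one]
    split <;> simp
  | succ k ih =>
    intro d
    rw [pow_succ, pow_succ, MvPolynomial.coeff_mul, MvPolynomial.coeff_mul]
    calc |∑ x ∈ Finset.HasAntidiagonal.antidiagonal d, (g ^ k).coeff x.1 * g.coeff x.2|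
        ≤ ∑ x ∈ Finset.HasAntidiagonal.antidiagonal d, |(g ^ k).coeff x.1 * g.coeff x.2| :=
          Finset.abs_sum_le_sum_abs _ _
      _ ≤ ∑ x ∈ Finset.HasAntidiagonal.antidiagonal d, (f ^ k).coeff x.1 * f.coeff x.2 := by
          refine Finset.sum_le_sum fun x _ => ?_
          rw [abs_mul]
          exact mul_le_mul (ih x.1) (hmaj x.2) (abs_nonneg _)
            ((abs_nonneg _).trans (ih x.1))

/-- If the (nonnegative) coefficients of `f` majorize the absolute
values of the coefficients of `g` (both homogeneous of degree `p`), then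
`‖f^k‖_HS ≥ ‖g^k‖_HS` for every positive integer `k`. -/
theorem bombieriNorm_pow_mono_of_majorize {n p : ℕ}
    (f g : MvPolynomial (Fin n) ℝ)
    (hf : f.IsHomogeneous p) (hg : g.IsHomogeneous p)
    (hmaj : ∀ d : Fin n →₀ ℕ, |g.coeff d| ≤ f.coeff d) :
    ∀ k : ℕ, 0 < k →
      bombieriNorm (k * p) (g ^ k) ≤ bombieriNorm (k * p) (f ^ k) := by
  intro k _
  have key := abs_coeff_pow_le f g hmaj k
  apply Real.sqrt_le_sqrt
  have hw : ∀ d : Fin n →₀ ℕ,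
      0 ≤ (∏ i, (Nat.factorial (d i) : ℝ)) / (Nat.factorial (k * p) : ℝ) := by
    intro d
    apply div_nonneg
    · exact Finset.prod_nonneg fun i _ => by positivity
    · positivity
  have hsub : (g ^ k).support ⊆ (f ^ k).support := by
    intro d hd
    rw [MvPolynomial.mem_support_iff] at hd ⊢
    intro h
    have hk := key d
    rw [h] at hk
    exact hd (abs_eq_zero.mp ((abs_nonneg _).antisymm hk).symm)
  calc ∑ d ∈ (g ^ k).support,
        ((∏ i, (Nat.factorial (d i) : ℝ)) / (Nat.factorial (k * p) : ℝ)) * ((g ^ k).coeff d) ^ 2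
      ≤ ∑ d ∈ (g ^ k).support,
        ((∏ i, (Nat.factorial (d i) : ℝ)) / (Nat.factorial (k * p) : ℝ)) * ((f ^ k).coeff d) ^ 2 := by
        refine Finset.sum_le_sum fun d _ => ?_
        refine mul_le_mul_of_nonneg_left ?_ (hw d)
        rw [← sq_abs ((g ^ k).coeff d)]
        exact pow_le_pow_left₀ (abs_nonneg _) (key d) 2
    _ ≤ ∑ d ∈ (f ^ k).support,
        ((∏ i, (Nat.factorial (d i) : ℝ)) / (Nat.factorial (k * p) : ℝ)) * ((f ^ k).coeff d) ^ 2 := by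
        refine Finset.sum_le_sum_of_subset_of_nonneg hsub fun d _ _ => ?_
        exact mul_nonneg (hw d) (sq_nonneg _)
end

section
/- If a homogeneous polynomial f of degree p in n real variables is orthogonally diagonalizable (i.e., f(Qx) = Σ λ_i x_i^p for some orthogonal matrix Q and reals λ_i), or more generally proportional to a power of an orthogonally diagonalizable polynomial, then ρ₁(f) := lim_{k→∞} ‖f^k‖_HS^{1/k} = ‖f‖_σ. -/
open scoped BigOperators
open MvPolynomial

namespace Rho1Aux

variable {n : ℕ}

/-- product of factorials of a multi-exponent, as a real number -/
noncomputable def Df (d : Fin n →₀ ℕ) : ℝ := ∏ i, (Nat.factorial (d i) : ℝ)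

lemma Df_pos (d : Fin n →₀ ℕ) : 0 < Df d := by
  apply Finset.prod_pos; intro i _; exact_mod_cast Nat.factorial_pos _

lemma Df_zero : Df (0 : Fin n →₀ ℕ) = 1 := by simp [Df]

/-- The (unnormalized) Bombieri pairing. -/
noncomputable def pairP (f g : MvPolynomial (Fin n) ℝ) : ℝ :=
  ∑ d ∈ f.support, Df d * f.coeff d * g.coeff d

lemma pairP_eq_sum {f : MvPolynomial (Fin n) ℝ} (g : MvPolynomial (Fin n) ℝ)
    {s : Finset (Fin n →₀ ℕ)} (hs : f.support ⊆ s) :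
    pairP f g = ∑ d ∈ s, Df d * f.coeff d * g.coeff d := by
  refine Finset.sum_subset hs fun d _ hd => ?_
  rw [MvPolynomial.notMem_support_iff.mp hd]; ring

lemma pairP_comm (f g : MvPolynomial (Fin n) ℝ) : pairP f g = pairP g f := by
  rw [pairP_eq_sum g (Finset.subset_union_left : f.support ⊆ f.support ∪ g.support),
      pairP_eq_sum f (Finset.subset_union_right : g.support ⊆ f.support ∪ g.support)]
  exact Finset.sum_congr rfl fun d _ => by ring

lemma pairP_zero_left (g : MvPolynomial (Fin n) ℝ) : pairP 0 g = 0 := by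
  simp [pairP]

lemma pairP_add_left (f₁ f₂ g : MvPolynomial (Fin n) ℝ) :
    pairP (f₁ + f₂) g = pairP f₁ g + pairP f₂ g := by
  rw [pairP_eq_sum (f := f₁ + f₂) g
      (MvPolynomial.support_add : (f₁ + f₂).support ⊆ f₁.support ∪ f₂.support),
    pairP_eq_sum (f := f₁) g (Finset.subset_union_left),
    pairP_eq_sum (f := f₂) g (Finset.subset_union_right), ← Finset.sum_add_distrib]
  exact Finset.sum_congr rfl fun d _ => by rw [MvPolynomial.coeff_add]; ring

lemma pairP_add_right (f g₁ g₂ : MvPolynomial (Fin n) ℝ) :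
    pairP f (g₁ + g₂) = pairP f g₁ + pairP f g₂ := by
  simp only [pairP, MvPolynomial.coeff_add, mul_add, Finset.sum_add_distrib]

lemma pairP_C_mul_left (c : ℝ) (f g : MvPolynomial (Fin n) ℝ) :
    pairP (MvPolynomial.C c * f) g = c * pairP f g := by
  have hsub : (MvPolynomial.C c * f).support ⊆ f.support := by
    intro d hd
    rw [MvPolynomial.mem_support_iff, MvPolynomial.coeff_C_mul] at hd
    rw [MvPolynomial.mem_support_iff]
    exact fun h => hd (by rw [h, mul_zero])
  rw [pairP_eq_sum g hsub, pairP, Finset.mul_sum]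
  exact Finset.sum_congr rfl fun d _ => by rw [MvPolynomial.coeff_C_mul]; ring

lemma pairP_C_mul_right (c : ℝ) (f g : MvPolynomial (Fin n) ℝ) :
    pairP f (MvPolynomial.C c * g) = c * pairP f g := by
  simp only [pairP, MvPolynomial.coeff_C_mul, Finset.mul_sum]
  exact Finset.sum_congr rfl fun d _ => by ring

lemma pairP_sum_left {α : Type*} (s : Finset α) (h : α → MvPolynomial (Fin n) ℝ)
    (g : MvPolynomial (Fin n) ℝ) :
    pairP (∑ j ∈ s, h j) g = ∑ j ∈ s, pairP (h j) g := by
  induction s using Finset.cons_induction with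
  | empty => simp [pairP_zero_left]
  | cons a s ha ih => rw [Finset.sum_cons, Finset.sum_cons, pairP_add_left, ih]

lemma pairP_sum_right {α : Type*} (s : Finset α) (f : MvPolynomial (Fin n) ℝ)
    (h : α → MvPolynomial (Fin n) ℝ) :
    pairP f (∑ j ∈ s, h j) = ∑ j ∈ s, pairP f (h j) := by
  induction s using Finset.cons_induction with
  | empty => simp [pairP]
  | cons a s ha ih => rw [Finset.sum_cons, Finset.sum_cons, pairP_add_right, ih]

lemma pairP_self_nonneg (f : MvPolynomial (Fin n) ℝ) : 0 ≤ pairP f f :=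
  Finset.sum_nonneg fun d _ => by
    rw [mul_assoc]; exact mul_nonneg (Df_pos d).le (mul_self_nonneg _)

lemma pairP_C_left (a : ℝ) (g : MvPolynomial (Fin n) ℝ) :
    pairP (MvPolynomial.C a) g = a * MvPolynomial.constantCoeff g := by
  have hsub : (MvPolynomial.C a : MvPolynomial (Fin n) ℝ).support ⊆ {0} := by
    intro d hd
    rw [MvPolynomial.mem_support_iff, MvPolynomial.coeff_C] at hd
    rcases eq_or_ne (0 : Fin n →₀ ℕ) d with h | h
    · simp [h.symm]
    · simp [h] at hd
  rw [pairP_eq_sum g hsub, Finset.sum_singleton, Df_zero, MvPolynomial.coeff_zero_C,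
    MvPolynomial.constantCoeff_eq]
  ring


lemma bombieriNorm_eq (p : ℕ) (f : MvPolynomial (Fin n) ℝ) :
    bombieriNorm p f = Real.sqrt (pairP f f / (Nat.factorial p : ℝ)) := by
  rw [bombieriNorm, pairP, Finset.sum_div]
  congr 1
  exact Finset.sum_congr rfl fun d _ => by rw [Df]; ring

lemma coeff_pderiv (i : Fin n) (g : MvPolynomial (Fin n) ℝ) (d : Fin n →₀ ℕ) :
    MvPolynomial.coeff d (MvPolynomial.pderiv i g)
      = ((d i : ℝ) + 1) * MvPolynomial.coeff (d + Finsupp.single i 1) g := by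
  induction g using MvPolynomial.induction_on' with
  | monomial s a =>
    rw [MvPolynomial.pderiv_monomial]
    rcases Nat.eq_zero_or_pos (s i) with hs | hs
    · have h1 : MvPolynomial.coeff d (MvPolynomial.monomial (s - Finsupp.single i 1) (a * s i))
          = 0 := by
        rw [hs]; push_cast; rw [mul_zero]; simp
      have h2 : s ≠ d + Finsupp.single i 1 := by
        intro h
        have h3 := congrArg (fun e : Fin n →₀ ℕ => e i) h
        simp only [Finsupp.add_apply, Finsupp.single_eq_same, hs] at h3
        omega
      rw [h1, MvPolynomial.coeff_monomial, if_neg h2, mul_zero]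
    · rw [MvPolynomial.coeff_monomial, MvPolynomial.coeff_monomial]
      by_cases h : s = d + Finsupp.single i 1
      · have hd : s - Finsupp.single i 1 = d := by
          rw [h]; ext j; simp
        have hsi := congrArg (fun e : Fin n →₀ ℕ => e i) h
        simp only [Finsupp.add_apply, Finsupp.single_eq_same] at hsi
        rw [if_pos hd, if_pos h, hsi]; push_cast; ring
      · have hd : s - Finsupp.single i 1 ≠ d := by
          intro hc
          apply h
          have hcj : ∀ j, s j - Finsupp.single i 1 j = d j := by
            intro j
            have := congrArg (fun e : Fin n →₀ ℕ => e j) hc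
            simpa using this
          ext j
          simp only [Finsupp.add_apply]
          have h2 := hcj j
          rcases eq_or_ne j i with rfl | hj
          · rw [Finsupp.single_eq_same] at h2 ⊢; omega
          · rw [Finsupp.single_eq_of_ne' (Ne.symm hj)] at h2 ⊢; omega
        rw [if_neg hd, if_neg h, mul_zero]
  | add f g hf hg =>
    rw [map_add, MvPolynomial.coeff_add, MvPolynomial.coeff_add, hf, hg]; ring

lemma Df_add_single (d : Fin n →₀ ℕ) (i : Fin n) :
    Df (d + Finsupp.single i 1) = ((d i : ℝ) + 1) * Df d := by
  rw [Df, Df]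
  have h1 : ∀ j : Fin n, (Nat.factorial (((d + Finsupp.single i 1) : Fin n →₀ ℕ) j) : ℝ)
      = Function.update (fun j => (Nat.factorial (d j) : ℝ)) i
          ((Nat.factorial (d i + 1) : ℝ)) j := by
    intro j
    rcases eq_or_ne j i with rfl | hj
    · simp
    · rw [Function.update_of_ne hj]
      rw [Finsupp.add_apply, Finsupp.single_eq_of_ne' (Ne.symm hj), add_zero]
  rw [Finset.prod_congr rfl fun j _ => h1 j,
    Finset.prod_update_of_mem (Finset.mem_univ i),
    ← Finset.prod_erase_mul _ _ (Finset.mem_univ i), Nat.factorial_succ]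
  rw [Finset.sdiff_singleton_eq_erase]
  push_cast; ring

lemma pairP_mul_X (f g : MvPolynomial (Fin n) ℝ) (i : Fin n) :
    pairP (f * MvPolynomial.X i) g = pairP f (MvPolynomial.pderiv i g) := by
  rw [pairP, MvPolynomial.support_mul_X, Finset.sum_map]
  refine Finset.sum_congr rfl fun d _ => ?_
  simp only [addRightEmbedding_apply]
  rw [MvPolynomial.coeff_mul_X, Df_add_single, coeff_pderiv]
  ring

/-- Substitution `Xᵢ ↦ ∑ⱼ Qᵢⱼ Xⱼ`. -/
noncomputable def subQ (Q : Matrix (Fin n) (Fin n) ℝ) :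
    MvPolynomial (Fin n) ℝ →ₐ[ℝ] MvPolynomial (Fin n) ℝ :=
  MvPolynomial.aeval (fun i => ∑ j, MvPolynomial.C (Q i j) * MvPolynomial.X j)

lemma subQ_X (Q : Matrix (Fin n) (Fin n) ℝ) (i : Fin n) :
    subQ Q (MvPolynomial.X i) = ∑ j, MvPolynomial.C (Q i j) * MvPolynomial.X j :=
  MvPolynomial.aeval_X _ i

lemma subQ_C (Q : Matrix (Fin n) (Fin n) ℝ) (a : ℝ) :
    subQ Q (MvPolynomial.C a) = MvPolynomial.C a := by
  simp [subQ]

lemma eval_subQ (Q : Matrix (Fin n) (Fin n) ℝ) (g : MvPolynomial (Fin n) ℝ) (x : Fin n → ℝ) :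
    MvPolynomial.eval x (subQ Q g) = MvPolynomial.eval (Q.mulVec x) g := by
  induction g using MvPolynomial.induction_on with
  | C a => rw [subQ_C]; simp
  | add f g hf hg => rw [map_add, map_add, map_add, hf, hg]
  | mul_X p i hp =>
    rw [map_mul, map_mul, map_mul, hp, subQ_X, MvPolynomial.eval_X]
    congr 1
    rw [map_sum]
    simp [Matrix.mulVec, dotProduct]

lemma constantCoeff_subQ (Q : Matrix (Fin n) (Fin n) ℝ) (g : MvPolynomial (Fin n) ℝ) :
    MvPolynomial.constantCoeff (subQ Q g) = MvPolynomial.constantCoeff g := by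
  induction g using MvPolynomial.induction_on with
  | C a => rw [subQ_C]
  | add f g hf hg => rw [map_add, map_add, map_add, hf, hg]
  | mul_X p i hp =>
    rw [map_mul, map_mul, map_mul, hp, subQ_X, map_sum]
    simp

lemma pderiv_subQ (Q : Matrix (Fin n) (Fin n) ℝ) (j : Fin n) (g : MvPolynomial (Fin n) ℝ) :
    MvPolynomial.pderiv j (subQ Q g)
      = ∑ i, MvPolynomial.C (Q i j) * subQ Q (MvPolynomial.pderiv i g) := by
  induction g using MvPolynomial.induction_on with
  | C a => simp [subQ_C]
  | add f g hf hg =>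
    rw [map_add, map_add, hf, hg, ← Finset.sum_add_distrib]
    refine Finset.sum_congr rfl fun i _ => ?_
    rw [map_add, map_add, mul_add]
  | mul_X p i' hp =>
    rw [map_mul, subQ_X, MvPolynomial.pderiv_mul, hp]
    have hL : MvPolynomial.pderiv j (∑ t, MvPolynomial.C (Q i' t) * MvPolynomial.X t)
        = MvPolynomial.C (Q i' j) := by
      rw [map_sum]
      rw [Finset.sum_congr rfl (fun t _ => MvPolynomial.pderiv_C_mul)]
      simp only [MvPolynomial.pderiv_X, Pi.single_apply]
      simp only [mul_ite, mul_one, mul_zero]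
      rw [Finset.sum_ite_eq' Finset.univ j fun t => MvPolynomial.C (Q i' t)]
      simp
    rw [hL]
    have hR : ∀ i : Fin n, subQ Q (MvPolynomial.pderiv i (p * MvPolynomial.X i'))
        = subQ Q (MvPolynomial.pderiv i p) * (∑ t, MvPolynomial.C (Q i' t) * MvPolynomial.X t)
          + subQ Q p * (if i' = i then 1 else 0) := by
      intro i
      rw [MvPolynomial.pderiv_mul, map_add, map_mul, map_mul, subQ_X,
        MvPolynomial.pderiv_X, Pi.single_apply]
      congr 1
      split_ifs with h
      · rw [map_one]
      · rw [map_zero]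
    have hsum : (∑ i, MvPolynomial.C (Q i j) * subQ Q (MvPolynomial.pderiv i (p * MvPolynomial.X i')))
        = ∑ i, MvPolynomial.C (Q i j) * (subQ Q (MvPolynomial.pderiv i p)
            * (∑ t, MvPolynomial.C (Q i' t) * MvPolynomial.X t)
          + subQ Q p * (if i' = i then 1 else 0)) :=
      Finset.sum_congr rfl fun i _ => by rw [hR i]
    rw [hsum]
    simp only [mul_add, Finset.sum_add_distrib]
    congr 1
    · rw [Finset.sum_mul]
      refine Finset.sum_congr rfl fun i _ => by ring
    · simp only [mul_ite, mul_one, mul_zero, ← mul_assoc]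
      rw [Finset.sum_ite_eq Finset.univ i'
        fun i => MvPolynomial.C (Q i j) * subQ Q p]
      simp [mul_comm]

lemma pairP_subQ (Q : Matrix (Fin n) (Fin n) ℝ) (hQ : Q * Q.transpose = 1)
    (f : MvPolynomial (Fin n) ℝ) :
    ∀ g : MvPolynomial (Fin n) ℝ, pairP (subQ Q f) (subQ Q g) = pairP f g := by
  induction f using MvPolynomial.induction_on with
  | C a =>
    intro g
    rw [subQ_C, pairP_C_left, pairP_C_left, constantCoeff_subQ]
  | add f₁ f₂ h₁ h₂ =>
    intro g
    rw [map_add, pairP_add_left, pairP_add_left, h₁ g, h₂ g]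
  | mul_X p i hp =>
    intro g
    have hsplit : subQ Q (p * MvPolynomial.X i)
        = ∑ j, MvPolynomial.C (Q i j) * (subQ Q p * MvPolynomial.X j) := by
      rw [map_mul, subQ_X, Finset.mul_sum]
      exact Finset.sum_congr rfl fun j _ => by ring
    rw [hsplit, pairP_sum_left]
    have h1 : ∀ j, pairP (MvPolynomial.C (Q i j) * (subQ Q p * MvPolynomial.X j)) (subQ Q g)
        = Q i j * pairP (subQ Q p) (MvPolynomial.pderiv j (subQ Q g)) := fun j => by
      rw [pairP_C_mul_left, pairP_mul_X]
    rw [Finset.sum_congr rfl fun j _ => h1 j]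
    have h2 : ∀ j, pairP (subQ Q p) (MvPolynomial.pderiv j (subQ Q g))
        = ∑ i', Q i' j * pairP (subQ Q p) (subQ Q (MvPolynomial.pderiv i' g)) := fun j => by
      rw [pderiv_subQ, pairP_sum_right]
      exact Finset.sum_congr rfl fun i' _ => by rw [pairP_C_mul_right]
    rw [Finset.sum_congr rfl fun j (_ : j ∈ Finset.univ) => by rw [h2 j]]
    simp only [Finset.mul_sum]
    rw [Finset.sum_comm]
    have h3 : ∀ i', ∑ j, Q i j * (Q i' j * pairP (subQ Q p) (subQ Q (MvPolynomial.pderiv i' g)))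
        = ((1 : Matrix (Fin n) (Fin n) ℝ) i i') * pairP (subQ Q p) (subQ Q (MvPolynomial.pderiv i' g)) := by
      intro i'
      rw [← hQ, Matrix.mul_apply, Finset.sum_mul]
      exact Finset.sum_congr rfl fun j _ => by rw [Matrix.transpose_apply]; ring
    rw [Finset.sum_congr rfl fun i' _ => h3 i']
    simp only [Matrix.one_apply, ite_mul, one_mul, zero_mul]
    rw [Finset.sum_ite_eq Finset.univ i
      fun i' => pairP (subQ Q p) (subQ Q (MvPolynomial.pderiv i' g))]
    rw [if_pos (Finset.mem_univ i), hp (MvPolynomial.pderiv i g), pairP_mul_X]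

/-! ### Combinatorial inequalities for multinomial coefficients -/

lemma choose_mul_choose_le (a b c d : ℕ) :
    (a + b).choose a * (c + d).choose c ≤ (a + b + (c + d)).choose (a + c) := by
  conv_rhs => rw [Nat.add_choose_eq]
  exact Finset.single_le_sum (f := fun ij : ℕ × ℕ => (a+b).choose ij.1 * (c+d).choose ij.2)
    (fun _ _ => Nat.zero_le _)
    (Finset.HasAntidiagonal.mem_antidiagonal.mpr rfl : (a, c) ∈ Finset.HasAntidiagonal.antidiagonal (a + c))

lemma prod_choose_le {ι : Type*} (s : Finset ι) (f g : ι → ℕ) :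
    (∏ i ∈ s, (f i + g i).choose (f i))
      ≤ ((∑ i ∈ s, f i) + (∑ i ∈ s, g i)).choose (∑ i ∈ s, f i) := by
  induction s using Finset.cons_induction with
  | empty => simp
  | cons a s ha ih =>
    rw [Finset.prod_cons, Finset.sum_cons, Finset.sum_cons]
    calc (f a + g a).choose (f a) * ∏ i ∈ s, (f i + g i).choose (f i)
        ≤ (f a + g a).choose (f a) * ((∑ i ∈ s, f i) + (∑ i ∈ s, g i)).choose (∑ i ∈ s, f i) :=
          Nat.mul_le_mul_left _ ih
      _ ≤ (f a + g a + ((∑ i ∈ s, f i) + (∑ i ∈ s, g i))).choose (f a + ∑ i ∈ s, f i) :=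
          choose_mul_choose_le _ _ _ _
      _ = (f a + (∑ i ∈ s, f i) + (g a + ∑ i ∈ s, g i)).choose (f a + ∑ i ∈ s, f i) := by
          have h : f a + g a + ((∑ i ∈ s, f i) + (∑ i ∈ s, g i))
              = f a + (∑ i ∈ s, f i) + (g a + ∑ i ∈ s, g i) := by omega
          rw [h]

lemma multinomial_mul_le {ι : Type*} (s : Finset ι) (f g : ι → ℕ) :
    Nat.multinomial s f * Nat.multinomial s g ≤ Nat.multinomial s (f + g) := by
  set A := ∑ i ∈ s, f i with hA
  set B := ∑ i ∈ s, g i with hB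
  have hT : 0 < ∏ i ∈ s, (f i + g i).factorial :=
    Finset.prod_pos fun i _ => Nat.factorial_pos _
  refine Nat.le_of_mul_le_mul_left ?_ hT
  have key : (∏ i ∈ s, (f i + g i).factorial) * (Nat.multinomial s f * Nat.multinomial s g)
      = (∏ i ∈ s, (f i + g i).choose (f i)) * (A.factorial * B.factorial) := by
    have h1 : ∀ i ∈ s, (f i + g i).factorial
        = (f i + g i).choose (f i) * ((f i).factorial * (g i).factorial) := fun i _ => by
      have h := Nat.choose_mul_factorial_mul_factorial (Nat.le_add_right (f i) (g i))
      simp only [Nat.add_sub_cancel_left] at h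
      rw [← h]; ring
    rw [Finset.prod_congr rfl h1, Finset.prod_mul_distrib, Finset.prod_mul_distrib]
    have h2 := Nat.multinomial_spec s f
    have h3 := Nat.multinomial_spec s g
    calc (∏ i ∈ s, (f i + g i).choose (f i))
          * ((∏ i ∈ s, (f i).factorial) * ∏ i ∈ s, (g i).factorial)
          * (Nat.multinomial s f * Nat.multinomial s g)
        = (∏ i ∈ s, (f i + g i).choose (f i))
            * (((∏ i ∈ s, (f i).factorial) * Nat.multinomial s f)
              * ((∏ i ∈ s, (g i).factorial) * Nat.multinomial s g)) := by ring
      _ = _ := by rw [h2, h3, ← hA, ← hB]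
  rw [key]
  have key2 : (∏ i ∈ s, (f i + g i).factorial) * Nat.multinomial s (f + g)
      = (A + B).factorial := by
    have := Nat.multinomial_spec s (f + g)
    simpa [Pi.add_apply, Finset.sum_add_distrib, ← hA, ← hB] using this
  rw [key2]
  calc (∏ i ∈ s, (f i + g i).choose (f i)) * (A.factorial * B.factorial)
      ≤ ((A + B).choose A) * (A.factorial * B.factorial) := by
        exact Nat.mul_le_mul_right _ (prod_choose_le s f g)
    _ = (A + B).choose A * A.factorial * (A + B - A).factorial := by
        have h : A + B - A = B := by omega
        rw [h, mul_assoc]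
    _ = (A + B).factorial := Nat.choose_mul_factorial_mul_factorial (Nat.le_add_right A B)

lemma one_le_multinomial {ι : Type*} {s : Finset ι} {f : ι → ℕ} :
    1 ≤ Nat.multinomial s f := Nat.multinomial_pos s f

lemma multinomial_sq_le {q : ℕ} (hq : 2 ≤ q) (k : Fin n → ℕ) :
    Nat.multinomial Finset.univ k * Nat.multinomial Finset.univ k
      ≤ Nat.multinomial Finset.univ (fun i => q * k i) := by
  induction q, hq using Nat.le_induction with
  | base =>
    have : (fun i => 2 * k i) = k + k := by funext i; simp [two_mul]
    rw [this]
    exact multinomial_mul_le _ _ _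
  | succ q hq ih =>
    have : (fun i => (q + 1) * k i) = (fun i => q * k i) + k := by
      funext i; simp [add_mul]
    rw [this]
    calc Nat.multinomial Finset.univ k * Nat.multinomial Finset.univ k
        ≤ Nat.multinomial Finset.univ (fun i => q * k i) := ih
      _ = Nat.multinomial Finset.univ (fun i => q * k i) * 1 := (mul_one _).symm
      _ ≤ Nat.multinomial Finset.univ (fun i => q * k i) * Nat.multinomial Finset.univ k :=
          Nat.mul_le_mul_left _ one_le_multinomial
      _ ≤ _ := multinomial_mul_le _ _ _

lemma multinomial_sq_fact_le {q : ℕ} (hq : 2 ≤ q) (k : Fin n → ℕ) :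
    Nat.multinomial Finset.univ k * Nat.multinomial Finset.univ k
        * ∏ i, (q * k i).factorial
      ≤ (q * ∑ i, k i).factorial := by
  have h1 := Nat.multinomial_spec Finset.univ (fun i => q * k i)
  have h2 : ∑ i, q * k i = q * ∑ i, k i := by rw [Finset.mul_sum]
  calc Nat.multinomial Finset.univ k * Nat.multinomial Finset.univ k * ∏ i, (q * k i).factorial
      ≤ Nat.multinomial Finset.univ (fun i => q * k i) * ∏ i, (q * k i).factorial :=
        Nat.mul_le_mul_right _ (multinomial_sq_le hq k)
    _ = (q * ∑ i, k i).factorial := by rw [mul_comm, h1, h2]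

/-! ### Expansion of powers of diagonal forms -/

noncomputable def dd (q : ℕ) (k : Fin n → ℕ) : Fin n →₀ ℕ :=
  Finsupp.equivFunOnFinite.symm (fun i => q * k i)

lemma dd_apply (q : ℕ) (k : Fin n → ℕ) (i : Fin n) : dd q k i = q * k i := rfl

lemma dd_injective {q : ℕ} (hq : 1 ≤ q) : Function.Injective (dd (n := n) q) := by
  intro k k' h
  funext i
  have := congrArg (fun e : Fin n →₀ ℕ => e i) h
  simp only [dd_apply] at this
  exact Nat.eq_of_mul_eq_mul_left hq this

lemma prod_X_pow_univ (e : Fin n → ℕ) :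
    (∏ i, (MvPolynomial.X i : MvPolynomial (Fin n) ℝ) ^ e i)
      = MvPolynomial.monomial (Finsupp.equivFunOnFinite.symm e) 1 := by
  set d : Fin n →₀ ℕ := Finsupp.equivFunOnFinite.symm e with hd
  have he : ∀ i, e i = d i := fun i => rfl
  rw [← MvPolynomial.prod_X_pow_eq_monomial (s := d)]
  symm
  apply Finset.prod_subset (Finset.subset_univ _)
  intro i _ hi
  rw [Finsupp.notMem_support_iff.mp hi, pow_zero]

lemma diag_pow_expand (lam : Fin n → ℝ) (q N : ℕ) :
    (∑ i, MvPolynomial.C (lam i) * MvPolynomial.X i ^ q) ^ N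
      = ∑ k ∈ Finset.piAntidiag Finset.univ N,
          MvPolynomial.monomial (dd q k)
            ((Nat.multinomial Finset.univ k : ℝ) * ∏ i, lam i ^ k i) := by
  rw [Finset.sum_pow_eq_sum_piAntidiag]
  refine Finset.sum_congr rfl fun k hk => ?_
  have h1 : ∀ i : Fin n, (MvPolynomial.C (lam i) * MvPolynomial.X i ^ q) ^ k i
      = MvPolynomial.C (lam i ^ k i) * MvPolynomial.X i ^ (q * k i) := by
    intro i
    rw [mul_pow, ← pow_mul, map_pow]
  rw [Finset.prod_congr rfl fun i _ => h1 i, Finset.prod_mul_distrib,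
    ← map_prod, prod_X_pow_univ]
  have h2 : ((Nat.multinomial Finset.univ k : MvPolynomial (Fin n) ℝ))
      = MvPolynomial.C ((Nat.multinomial Finset.univ k : ℝ)) := by
    simp
  rw [h2, MvPolynomial.C_mul_monomial, MvPolynomial.C_mul_monomial, mul_one]
  rfl

lemma diag_pow_support (lam : Fin n → ℝ) (q N : ℕ) :
    ((∑ i, MvPolynomial.C (lam i) * MvPolynomial.X i ^ q) ^ N).support
      ⊆ (Finset.piAntidiag (Finset.univ : Finset (Fin n)) N).image (dd q) := by
  classical
  rw [diag_pow_expand]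
  refine MvPolynomial.support_sum.trans (Finset.biUnion_subset.mpr fun k hk => ?_)
  intro d hd
  have : d = dd q k := by
    by_contra hne
    have := MvPolynomial.support_monomial (a := (Nat.multinomial Finset.univ k : ℝ)
      * ∏ i, lam i ^ k i) (s := dd q k) (h := Classical.dec _) ▸ hd
    split_ifs at this with h0
    · exact absurd this (Finset.notMem_empty d)
    · exact hne (Finset.mem_singleton.mp this)
  exact this ▸ Finset.mem_image_of_mem _ hk

lemma diag_pow_coeff (lam : Fin n → ℝ) {q : ℕ} (N : ℕ) (hq : 1 ≤ q) {k₀ : Fin n → ℕ}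
    (hk₀ : k₀ ∈ Finset.piAntidiag (Finset.univ : Finset (Fin n)) N) :
    MvPolynomial.coeff (dd q k₀) ((∑ i, MvPolynomial.C (lam i) * MvPolynomial.X i ^ q) ^ N)
      = (Nat.multinomial Finset.univ k₀ : ℝ) * ∏ i, lam i ^ k₀ i := by
  rw [diag_pow_expand, MvPolynomial.coeff_sum]
  rw [Finset.sum_eq_single k₀]
  · rw [MvPolynomial.coeff_monomial, if_pos rfl]
  · intro k hk hne
    rw [MvPolynomial.coeff_monomial, if_neg (fun h => hne (dd_injective hq h))]
  · intro h; exact absurd hk₀ h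
  
lemma pairP_diag_pow (lam : Fin n → ℝ) {q : ℕ} (N : ℕ) (hq : 1 ≤ q) :
    pairP ((∑ i, MvPolynomial.C (lam i) * MvPolynomial.X i ^ q) ^ N)
        ((∑ i, MvPolynomial.C (lam i) * MvPolynomial.X i ^ q) ^ N)
      = ∑ k ∈ Finset.piAntidiag (Finset.univ : Finset (Fin n)) N,
          Df (dd q k) * ((Nat.multinomial Finset.univ k : ℝ) * ∏ i, lam i ^ k i) ^ 2 := by
  rw [pairP_eq_sum _ (diag_pow_support lam q N),
    Finset.sum_image (fun k _ k' _ h => dd_injective hq h)]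
  refine Finset.sum_congr rfl fun k hk => ?_
  rw [diag_pow_coeff lam N hq hk]
  ring

lemma eval_diag (lam : Fin n → ℝ) (q : ℕ) (x : Fin n → ℝ) :
    MvPolynomial.eval x (∑ i, MvPolynomial.C (lam i) * MvPolynomial.X i ^ q)
      = ∑ i, lam i * x i ^ q := by
  rw [map_sum]
  simp

lemma Df_dd (q : ℕ) (k : Fin n → ℕ) :
    Df (dd q k) = ((∏ i, (q * k i).factorial : ℕ) : ℝ) := by
  rw [Df, Nat.cast_prod]
  rfl

lemma card_piAntidiag_le (N : ℕ) :
    ((Finset.piAntidiag (Finset.univ : Finset (Fin n)) N).card : ℝ) ≤ ((N : ℝ) + 1) ^ n := by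
  have h : (Finset.piAntidiag (Finset.univ : Finset (Fin n)) N).card ≤ (N + 1) ^ n := by
    have h2 := Finset.card_le_card_of_injOn
      (s := Finset.piAntidiag (Finset.univ : Finset (Fin n)) N)
      (f := fun (k : Fin n → ℕ) (i : Fin n) => (⟨min (k i) N, by omega⟩ : Fin (N + 1)))
      (t := (Finset.univ : Finset (Fin n → Fin (N + 1))))
      (fun k _ => Finset.mem_univ _) ?_
    · calc (Finset.piAntidiag (Finset.univ : Finset (Fin n)) N).card
          ≤ (Finset.univ : Finset (Fin n → Fin (N + 1))).card := h2
        _ = (N + 1) ^ n := by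
            rw [Finset.card_univ, Fintype.card_fun, Fintype.card_fin, Fintype.card_fin]
    · intro k hk k' hk' h
      have hkN : ∀ i, k i ≤ N := by
        intro i
        rw [Finset.mem_coe, Finset.mem_piAntidiag] at hk
        exact hk.1 ▸ Finset.single_le_sum (fun j _ => Nat.zero_le (k j)) (Finset.mem_univ i)
      have hk'N : ∀ i, k' i ≤ N := by
        intro i
        rw [Finset.mem_coe, Finset.mem_piAntidiag] at hk'
        exact hk'.1 ▸ Finset.single_le_sum (fun j _ => Nat.zero_le (k' j)) (Finset.mem_univ i)
      funext i
      have := congrFun h i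
      have := congrArg Fin.val this
      simp only [min_eq_left (hkN i), min_eq_left (hk'N i)] at this
      exact this
  calc ((Finset.piAntidiag (Finset.univ : Finset (Fin n)) N).card : ℝ)
      ≤ (((N + 1) ^ n : ℕ) : ℝ) := by exact_mod_cast h
    _ = ((N : ℝ) + 1) ^ n := by push_cast; ring

lemma prod_sq_le_pow {lam : Fin n → ℝ} {SG : ℝ} (hmax : ∀ i, |lam i| ≤ SG)
    (k : Fin n → ℕ) (N : ℕ) (hsum : ∑ i, k i = N) :
    (∏ i, (lam i ^ 2) ^ k i) ≤ SG ^ (2 * N) := by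
  have h1 : (∏ i, (lam i ^ 2) ^ k i) ≤ ∏ i, (SG ^ 2) ^ k i := by
    apply Finset.prod_le_prod
    · intro i _; positivity
    · intro i _
      apply pow_le_pow_left₀ (sq_nonneg _)
      rw [← sq_abs]
      apply pow_le_pow_left₀ (abs_nonneg _) (hmax i)
  calc (∏ i, (lam i ^ 2) ^ k i) ≤ ∏ i, (SG ^ 2) ^ k i := h1
    _ = (SG ^ 2) ^ (∑ i, k i) := Finset.prod_pow_eq_pow_sum _ _ _
    _ = SG ^ (2 * N) := by rw [hsum, ← pow_mul, mul_comm]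

/-- Main package: for a diagonal form `∑ λᵢ Xᵢ^q`, there is a value `SG` attained on the
unit sphere such that the Bombieri pairing of its `N`-th power is controlled by `SG^(2N)`. -/
lemma diag_package (lam : Fin n → ℝ) {q : ℕ} (hq : 1 ≤ q) (hn : 0 < n) :
    ∃ SG : ℝ, 0 ≤ SG ∧
      (∃ x : Fin n → ℝ, (∑ i, x i ^ 2) = 1 ∧
        |MvPolynomial.eval x (∑ i, MvPolynomial.C (lam i) * MvPolynomial.X i ^ q)| = SG) ∧
      ∀ N : ℕ,
        pairP ((∑ i, MvPolynomial.C (lam i) * MvPolynomial.X i ^ q) ^ N)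
            ((∑ i, MvPolynomial.C (lam i) * MvPolynomial.X i ^ q) ^ N)
          ≤ ((q * N).factorial : ℝ) * ((N : ℝ) + 1) ^ n * SG ^ (2 * N) := by
  have i₀ : Fin n := ⟨0, hn⟩
  -- the standard basis vector witness
  have basis_witness : ∀ j₀ : Fin n,
      (∑ i, (if i = j₀ then (1 : ℝ) else 0) ^ 2) = 1 ∧
      MvPolynomial.eval (fun i => if i = j₀ then (1 : ℝ) else 0)
        (∑ i, MvPolynomial.C (lam i) * MvPolynomial.X i ^ q) = lam j₀ := by
    intro j₀
    constructor
    · rw [Finset.sum_congr rfl (fun i (_ : i ∈ Finset.univ) => by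
        rw [show ((if i = j₀ then (1:ℝ) else 0)) ^ 2 = if i = j₀ then (1:ℝ) else 0 by
          split_ifs <;> norm_num])]
      rw [Finset.sum_ite_eq' Finset.univ j₀ fun _ => (1:ℝ)]
      simp
    · rw [eval_diag]
      have : ∀ i, lam i * (if i = j₀ then (1:ℝ) else 0) ^ q
          = if i = j₀ then lam i else 0 := by
        intro i
        split_ifs with h
        · rw [one_pow, mul_one]
        · rw [zero_pow (by omega), mul_zero]
      rw [Finset.sum_congr rfl fun i _ => this i]
      rw [Finset.sum_ite_eq' Finset.univ j₀ fun i => lam i]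
      simp
  rcases eq_or_lt_of_le hq with hq1 | hq2
  · -- q = 1
    subst hq1
    set SG := Real.sqrt (∑ i, lam i ^ 2) with hSG
    have hSzero : 0 ≤ ∑ i, lam i ^ 2 := Finset.sum_nonneg fun i _ => sq_nonneg _
    have hSGnn : 0 ≤ SG := Real.sqrt_nonneg _
    have hSGsq : SG ^ 2 = ∑ i, lam i ^ 2 := Real.sq_sqrt hSzero
    refine ⟨SG, hSGnn, ?_, ?_⟩
    · -- witness
      by_cases hzero : (∑ i, lam i ^ 2) = 0
      · refine ⟨fun i => if i = i₀ then 1 else 0, (basis_witness i₀).1, ?_⟩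
        rw [(basis_witness i₀).2]
        have h1 : lam i₀ ^ 2 ≤ 0 := by
          rw [← hzero]
          exact Finset.single_le_sum (fun i _ => sq_nonneg (lam i)) (Finset.mem_univ i₀)
        have h2 : lam i₀ = 0 := by nlinarith [sq_nonneg (lam i₀)]
        rw [h2, hSG, hzero, abs_zero, Real.sqrt_zero]
      · have hpos : 0 < SG := Real.sqrt_pos.mpr (lt_of_le_of_ne hSzero (Ne.symm hzero))
        refine ⟨fun i => lam i / SG, ?_, ?_⟩
        · rw [Finset.sum_congr rfl (fun i (_ : i ∈ Finset.univ) => div_pow (lam i) SG 2),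
            ← Finset.sum_div, hSGsq, div_self hzero]
        · rw [eval_diag]
          have : ∀ i, lam i * (lam i / SG) ^ 1 = lam i ^ 2 / SG := fun i => by
            rw [pow_one]; ring
          rw [Finset.sum_congr rfl fun i _ => this i, ← Finset.sum_div, ← hSGsq]
          rw [sq, mul_div_assoc, div_self hpos.ne', mul_one, abs_of_pos hpos]
    · -- bound
      intro N
      rw [pairP_diag_pow lam N le_rfl]
      have hterm : ∀ k ∈ Finset.piAntidiag (Finset.univ : Finset (Fin n)) N,
          Df (dd 1 k) * ((Nat.multinomial Finset.univ k : ℝ) * ∏ i, lam i ^ k i) ^ 2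
            ≤ (N.factorial : ℝ) * SG ^ (2 * N) := by
        intro k hk
        rw [Finset.mem_piAntidiag] at hk
        have hsum : ∑ i, k i = N := hk.1
        have hfact : Df (dd 1 k) = ((∏ i, (k i).factorial : ℕ) : ℝ) := by
          rw [Df_dd]
          norm_num
        have hspec : ((∏ i, (k i).factorial : ℕ) : ℝ) * (Nat.multinomial Finset.univ k : ℝ)
            = (N.factorial : ℝ) := by
          rw [← Nat.cast_mul, Nat.multinomial_spec, hsum]
        have hsq : ((Nat.multinomial Finset.univ k : ℝ) * ∏ i, lam i ^ k i) ^ 2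
            = (Nat.multinomial Finset.univ k : ℝ)
              * ((Nat.multinomial Finset.univ k : ℝ) * ∏ i, (lam i ^ 2) ^ k i) := by
          have : (∏ i, lam i ^ k i) ^ 2 = ∏ i, (lam i ^ 2) ^ k i := by
            rw [← Finset.prod_pow]
            exact Finset.prod_congr rfl fun i _ => by rw [← pow_mul, ← pow_mul, mul_comm]
          rw [mul_pow, this, sq]
          ring
        rw [hfact, hsq, ← mul_assoc, hspec]
        have hle : (Nat.multinomial Finset.univ k : ℝ) * ∏ i, (lam i ^ 2) ^ k i
            ≤ SG ^ (2 * N) := by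
          have hmt : (∑ i, lam i ^ 2) ^ N
              = ∑ k' ∈ Finset.piAntidiag (Finset.univ : Finset (Fin n)) N,
                  (Nat.multinomial Finset.univ k' : ℝ) * ∏ i, (lam i ^ 2) ^ k' i :=
            Finset.sum_pow_eq_sum_piAntidiag _ _ _
          have h2 : SG ^ (2 * N) = (∑ i, lam i ^ 2) ^ N := by
            rw [pow_mul, hSGsq]
          rw [h2, hmt]
          apply Finset.single_le_sum (f := fun k' =>
            (Nat.multinomial Finset.univ k' : ℝ) * ∏ i, (lam i ^ 2) ^ k' i)
            (fun k' _ => by positivity)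
          rw [Finset.mem_piAntidiag]
          exact ⟨hsum, fun i _ => Finset.mem_univ i⟩
        exact mul_le_mul_of_nonneg_left hle (by positivity)
      calc (∑ k ∈ Finset.piAntidiag (Finset.univ : Finset (Fin n)) N,
              Df (dd 1 k) * ((Nat.multinomial Finset.univ k : ℝ) * ∏ i, lam i ^ k i) ^ 2)
          ≤ (Finset.piAntidiag (Finset.univ : Finset (Fin n)) N).card
              • ((N.factorial : ℝ) * SG ^ (2 * N)) := Finset.sum_le_card_nsmul _ _ _ hterm
        _ = ((Finset.piAntidiag (Finset.univ : Finset (Fin n)) N).card : ℝ)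
              * ((N.factorial : ℝ) * SG ^ (2 * N)) := nsmul_eq_mul _ _
        _ ≤ ((N : ℝ) + 1) ^ n * ((N.factorial : ℝ) * SG ^ (2 * N)) := by
            apply mul_le_mul_of_nonneg_right (card_piAntidiag_le N) (by positivity)
        _ = ((1 * N).factorial : ℝ) * ((N : ℝ) + 1) ^ n * SG ^ (2 * N) := by
            rw [one_mul]; ring
  · -- 2 ≤ q
    obtain ⟨j₀, -, hmax⟩ := Finset.exists_max_image (Finset.univ : Finset (Fin n))
      (fun i => |lam i|) ⟨i₀, Finset.mem_univ i₀⟩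
    set SG := |lam j₀| with hSGdef
    have hmax' : ∀ i, |lam i| ≤ SG := fun i => hmax i (Finset.mem_univ i)
    refine ⟨SG, abs_nonneg _, ?_, ?_⟩
    · exact ⟨fun i => if i = j₀ then 1 else 0, (basis_witness j₀).1,
        by rw [(basis_witness j₀).2]⟩
    · intro N
      rw [pairP_diag_pow lam N hq]
      have hterm : ∀ k ∈ Finset.piAntidiag (Finset.univ : Finset (Fin n)) N,
          Df (dd q k) * ((Nat.multinomial Finset.univ k : ℝ) * ∏ i, lam i ^ k i) ^ 2
            ≤ ((q * N).factorial : ℝ) * SG ^ (2 * N) := by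
        intro k hk
        rw [Finset.mem_piAntidiag] at hk
        have hsum : ∑ i, k i = N := hk.1
        have hsq : ((Nat.multinomial Finset.univ k : ℝ) * ∏ i, lam i ^ k i) ^ 2
            = (Nat.multinomial Finset.univ k : ℝ) * (Nat.multinomial Finset.univ k : ℝ)
              * ∏ i, (lam i ^ 2) ^ k i := by
          have : (∏ i, lam i ^ k i) ^ 2 = ∏ i, (lam i ^ 2) ^ k i := by
            rw [← Finset.prod_pow]
            exact Finset.prod_congr rfl fun i _ => by rw [← pow_mul, ← pow_mul, mul_comm]
          rw [mul_pow, this]; ring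
        have hA : Df (dd q k) * ((Nat.multinomial Finset.univ k : ℝ)
              * (Nat.multinomial Finset.univ k : ℝ)) ≤ ((q * N).factorial : ℝ) := by
          rw [Df_dd, ← Nat.cast_mul, ← Nat.cast_mul]
          have := multinomial_sq_fact_le (hq2 : 2 ≤ q) k
          rw [hsum] at this
          exact_mod_cast (by
            calc (∏ i, (q * k i).factorial)
                  * (Nat.multinomial Finset.univ k * Nat.multinomial Finset.univ k)
                = Nat.multinomial Finset.univ k * Nat.multinomial Finset.univ k
                  * ∏ i, (q * k i).factorial := by ring
              _ ≤ (q * N).factorial := this)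
        have hB : (∏ i, (lam i ^ 2) ^ k i) ≤ SG ^ (2 * N) :=
          prod_sq_le_pow hmax' k N hsum
        calc Df (dd q k) * ((Nat.multinomial Finset.univ k : ℝ) * ∏ i, lam i ^ k i) ^ 2
            = (Df (dd q k) * ((Nat.multinomial Finset.univ k : ℝ)
                * (Nat.multinomial Finset.univ k : ℝ))) * ∏ i, (lam i ^ 2) ^ k i := by
              rw [hsq]; ring
          _ ≤ ((q * N).factorial : ℝ) * SG ^ (2 * N) := by
              apply mul_le_mul hA hB (Finset.prod_nonneg fun i _ => by positivity)
                (by positivity)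
      calc (∑ k ∈ Finset.piAntidiag (Finset.univ : Finset (Fin n)) N,
              Df (dd q k) * ((Nat.multinomial Finset.univ k : ℝ) * ∏ i, lam i ^ k i) ^ 2)
          ≤ (Finset.piAntidiag (Finset.univ : Finset (Fin n)) N).card
              • (((q * N).factorial : ℝ) * SG ^ (2 * N)) := Finset.sum_le_card_nsmul _ _ _ hterm
        _ = ((Finset.piAntidiag (Finset.univ : Finset (Fin n)) N).card : ℝ)
              * (((q * N).factorial : ℝ) * SG ^ (2 * N)) := nsmul_eq_mul _ _
        _ ≤ ((N : ℝ) + 1) ^ n * (((q * N).factorial : ℝ) * SG ^ (2 * N)) := by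
            apply mul_le_mul_of_nonneg_right (card_piAntidiag_le N) (by positivity)
        _ = ((q * N).factorial : ℝ) * ((N : ℝ) + 1) ^ n * SG ^ (2 * N) := by ring

/-! ### The sigma norm is dominated by the Bombieri norm -/

lemma sum_univ_eq_of_mem_support {P : ℕ} {h : MvPolynomial (Fin n) ℝ}
    (hh : h.IsHomogeneous P) {d : Fin n →₀ ℕ} (hd : d ∈ h.support) :
    (∑ i, d i) = P := by
  have h1 : d.degree = P := by
    by_contra hne
    exact MvPolynomial.mem_support_iff.mp hd (hh.coeff_eq_zero hne)
  rw [← h1, Finsupp.degree]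
  exact (Finset.sum_subset (Finset.subset_univ _)
    (fun i _ hi => Finsupp.notMem_support_iff.mp hi)).symm

lemma bombieriNorm_nonneg (P : ℕ) (h : MvPolynomial (Fin n) ℝ) : 0 ≤ bombieriNorm P h :=
  Real.sqrt_nonneg _

lemma abs_eval_le_bombieri {P : ℕ} {h : MvPolynomial (Fin n) ℝ} (hh : h.IsHomogeneous P)
    (x : Fin n → ℝ) (hx : (∑ i, x i ^ 2) = 1) :
    |MvPolynomial.eval x h| ≤ bombieriNorm P h := by
  have hPfac : (0:ℝ) < (Nat.factorial P : ℝ) := by exact_mod_cast Nat.factorial_pos P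
  set s := h.support with hs
  -- Cauchy-Schwarz
  have hCS := Finset.sum_mul_sq_le_sq_mul_sq s
    (fun d => Real.sqrt (Df d / (Nat.factorial P : ℝ)) * MvPolynomial.coeff d h)
    (fun d => Real.sqrt ((Nat.factorial P : ℝ) / Df d) * ∏ i, x i ^ d i)
  have hfg : ∀ d ∈ s,
      (Real.sqrt (Df d / (Nat.factorial P : ℝ)) * MvPolynomial.coeff d h)
        * (Real.sqrt ((Nat.factorial P : ℝ) / Df d) * ∏ i, x i ^ d i)
      = MvPolynomial.coeff d h * ∏ i, x i ^ d i := by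
    intro d _
    have h1 : Real.sqrt (Df d / (Nat.factorial P : ℝ))
        * Real.sqrt ((Nat.factorial P : ℝ) / Df d) = 1 := by
      rw [← Real.sqrt_mul (div_nonneg (Df_pos d).le hPfac.le), div_mul_div_comm, mul_comm,
        div_self (ne_of_gt (mul_pos hPfac (Df_pos d))), Real.sqrt_one]
    calc (Real.sqrt (Df d / (Nat.factorial P : ℝ)) * MvPolynomial.coeff d h)
          * (Real.sqrt ((Nat.factorial P : ℝ) / Df d) * ∏ i, x i ^ d i)
        = (Real.sqrt (Df d / (Nat.factorial P : ℝ))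
            * Real.sqrt ((Nat.factorial P : ℝ) / Df d))
          * (MvPolynomial.coeff d h * ∏ i, x i ^ d i) := by ring
      _ = MvPolynomial.coeff d h * ∏ i, x i ^ d i := by rw [h1, one_mul]
  have hf2 : ∀ d ∈ s,
      (Real.sqrt (Df d / (Nat.factorial P : ℝ)) * MvPolynomial.coeff d h) ^ 2
      = Df d / (Nat.factorial P : ℝ) * MvPolynomial.coeff d h ^ 2 := by
    intro d _
    rw [mul_pow, Real.sq_sqrt (div_nonneg (Df_pos d).le hPfac.le)]
  have hg2 : ∀ d ∈ s,
      (Real.sqrt ((Nat.factorial P : ℝ) / Df d) * ∏ i, x i ^ d i) ^ 2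
      = (Nat.factorial P : ℝ) / Df d * (∏ i, x i ^ d i) ^ 2 := by
    intro d _
    rw [mul_pow, Real.sq_sqrt (div_nonneg hPfac.le (Df_pos d).le)]
  rw [Finset.sum_congr rfl hfg, Finset.sum_congr rfl hf2, Finset.sum_congr rfl hg2] at hCS
  -- second factor is at most 1
  have hsecond : (∑ d ∈ s, (Nat.factorial P : ℝ) / Df d * (∏ i, x i ^ d i) ^ 2) ≤ 1 := by
    have hterm : ∀ d ∈ s, (Nat.factorial P : ℝ) / Df d * (∏ i, x i ^ d i) ^ 2
        = (Nat.multinomial Finset.univ (⇑d) : ℝ) * ∏ i, (x i ^ 2) ^ d i := by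
      intro d hd
      have hspec : Df d * (Nat.multinomial Finset.univ (⇑d) : ℝ) = (Nat.factorial P : ℝ) := by
        rw [Df, ← Nat.cast_prod, ← Nat.cast_mul, Nat.multinomial_spec,
          sum_univ_eq_of_mem_support hh hd]
      have hdiv : (Nat.factorial P : ℝ) / Df d = (Nat.multinomial Finset.univ (⇑d) : ℝ) := by
        rw [← hspec]
        field_simp [(Df_pos d).ne']
      have hprod : (∏ i, x i ^ d i) ^ 2 = ∏ i, (x i ^ 2) ^ d i := by
        rw [← Finset.prod_pow]
        exact Finset.prod_congr rfl fun i _ => by rw [← pow_mul, ← pow_mul, mul_comm]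
      rw [hdiv, hprod]
    rw [Finset.sum_congr rfl hterm]
    have himg : ∑ d ∈ s, (Nat.multinomial Finset.univ (⇑d) : ℝ) * ∏ i, (x i ^ 2) ^ d i
        = ∑ k ∈ s.image (fun d : Fin n →₀ ℕ => (⇑d : Fin n → ℕ)),
            (Nat.multinomial Finset.univ k : ℝ) * ∏ i, (x i ^ 2) ^ k i := by
      rw [Finset.sum_image]
      intro d _ d' _ hdd
      exact DFunLike.coe_injective hdd
    rw [himg]
    have hsub : s.image (fun d : Fin n →₀ ℕ => (⇑d : Fin n → ℕ))
        ⊆ Finset.piAntidiag (Finset.univ : Finset (Fin n)) P := by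
      intro k hk
      obtain ⟨d, hd, rfl⟩ := Finset.mem_image.mp hk
      rw [Finset.mem_piAntidiag]
      exact ⟨sum_univ_eq_of_mem_support hh hd, fun i _ => Finset.mem_univ i⟩
    calc ∑ k ∈ s.image (fun d : Fin n →₀ ℕ => (⇑d : Fin n → ℕ)),
            (Nat.multinomial Finset.univ k : ℝ) * ∏ i, (x i ^ 2) ^ k i
        ≤ ∑ k ∈ Finset.piAntidiag (Finset.univ : Finset (Fin n)) P,
            (Nat.multinomial Finset.univ k : ℝ) * ∏ i, (x i ^ 2) ^ k i := by
          apply Finset.sum_le_sum_of_subset_of_nonneg hsub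
          intro k _ _
          positivity
      _ = (∑ i, x i ^ 2) ^ P := (Finset.sum_pow_eq_sum_piAntidiag _ _ _).symm
      _ = 1 := by rw [hx, one_pow]
  -- assemble
  have heval : MvPolynomial.eval x h = ∑ d ∈ s, MvPolynomial.coeff d h * ∏ i, x i ^ d i :=
    MvPolynomial.eval_eq' x h
  have hBnn : 0 ≤ ∑ d ∈ s, Df d / (Nat.factorial P : ℝ) * MvPolynomial.coeff d h ^ 2 :=
    Finset.sum_nonneg fun d _ =>
      mul_nonneg (div_nonneg (Df_pos d).le hPfac.le) (sq_nonneg _)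
  have hsq : (MvPolynomial.eval x h) ^ 2
      ≤ ∑ d ∈ s, Df d / (Nat.factorial P : ℝ) * MvPolynomial.coeff d h ^ 2 := by
    calc (MvPolynomial.eval x h) ^ 2
        = (∑ d ∈ s, MvPolynomial.coeff d h * ∏ i, x i ^ d i) ^ 2 := by rw [heval]
      _ ≤ (∑ d ∈ s, Df d / (Nat.factorial P : ℝ) * MvPolynomial.coeff d h ^ 2)
          * (∑ d ∈ s, (Nat.factorial P : ℝ) / Df d * (∏ i, x i ^ d i) ^ 2) := hCS
      _ ≤ (∑ d ∈ s, Df d / (Nat.factorial P : ℝ) * MvPolynomial.coeff d h ^ 2) * 1 :=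
          mul_le_mul_of_nonneg_left hsecond hBnn
      _ = _ := mul_one _
  calc |MvPolynomial.eval x h| = Real.sqrt ((MvPolynomial.eval x h) ^ 2) :=
        (Real.sqrt_sq_eq_abs _).symm
    _ ≤ Real.sqrt (∑ d ∈ s, Df d / (Nat.factorial P : ℝ) * MvPolynomial.coeff d h ^ 2) :=
        Real.sqrt_le_sqrt hsq
    _ = bombieriNorm P h := by
        rw [bombieriNorm]
        congr 1

/-! ### Remaining helpers -/

lemma sum_sq_mulVec {Q : Matrix (Fin n) (Fin n) ℝ} (hQ : Q.transpose * Q = 1)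
    (x : Fin n → ℝ) : (∑ i, (Q.mulVec x i) ^ 2) = ∑ i, x i ^ 2 := by
  have expand : ∀ i : Fin n, (Q.mulVec x i) ^ 2
      = ∑ j, ∑ k, (Q i j * x j) * (Q i k * x k) := by
    intro i
    rw [sq]
    have : Q.mulVec x i = ∑ j, Q i j * x j := by
      simp [Matrix.mulVec, dotProduct]
    rw [this, Finset.sum_mul_sum]
  rw [Finset.sum_congr rfl fun i _ => expand i]
  rw [Finset.sum_comm]
  have h1 : ∀ j : Fin n, (∑ i, ∑ k, (Q i j * x j) * (Q i k * x k))
      = ∑ k, (∑ i, Q i j * Q i k) * (x j * x k) := by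
    intro j
    rw [Finset.sum_comm]
    refine Finset.sum_congr rfl fun k _ => ?_
    rw [Finset.sum_mul]
    exact Finset.sum_congr rfl fun i _ => by ring
  rw [Finset.sum_congr rfl fun j _ => h1 j]
  have h2 : ∀ j k : Fin n, (∑ i, Q i j * Q i k) = if j = k then (1:ℝ) else 0 := by
    intro j k
    have := congrFun (congrFun hQ j) k
    rw [Matrix.mul_apply] at this
    simp only [Matrix.transpose_apply] at this
    rw [this, Matrix.one_apply]
  refine Finset.sum_congr rfl fun j _ => ?_
  rw [Finset.sum_congr rfl fun k (_ : k ∈ Finset.univ) => by rw [h2 j k]]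
  simp only [ite_mul, one_mul, zero_mul]
  rw [Finset.sum_ite_eq Finset.univ j fun k => x j * x k]
  simp [sq]

lemma bombieriNorm_zero (P : ℕ) : bombieriNorm P (0 : MvPolynomial (Fin n) ℝ) = 0 := by
  simp [bombieriNorm]

lemma bombieriNorm_C (a : ℝ) : bombieriNorm 0 (MvPolynomial.C a : MvPolynomial (Fin n) ℝ) = |a| := by
  rcases eq_or_ne a 0 with rfl | ha
  · rw [map_zero, bombieriNorm_zero, abs_zero]
  · rw [bombieriNorm]
    have hsupp : (MvPolynomial.C a : MvPolynomial (Fin n) ℝ).support = {0} := by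
      rw [show (MvPolynomial.C a : MvPolynomial (Fin n) ℝ) = MvPolynomial.monomial 0 a from rfl]
      classical
      rw [MvPolynomial.support_monomial]
      simp [ha]
    rw [hsupp, Finset.sum_singleton]
    simp only [Finsupp.coe_zero, Pi.zero_apply, Nat.factorial_zero, Nat.cast_one,
      Finset.prod_const_one, Nat.cast_one, one_div_one, MvPolynomial.coeff_zero_C]
    rw [one_mul, Real.sqrt_sq_eq_abs]

lemma unit_sphere_exists (hn : 0 < n) :
    ∃ x : EuclideanSpace ℝ (Fin n), ‖x‖ = 1 := by
  refine ⟨EuclideanSpace.single ⟨0, hn⟩ (1:ℝ), ?_⟩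
  rw [EuclideanSpace.norm_single]
  norm_num

lemma norm_one_sum_sq {x : EuclideanSpace ℝ (Fin n)} (hx : ‖x‖ = 1) :
    (∑ i, (x i) ^ 2) = 1 := by
  rw [EuclideanSpace.norm_eq] at hx
  have h1 : (∑ i, ‖x i‖ ^ 2) = 1 := by
    have := congrArg (fun t : ℝ => t ^ 2) hx
    simp only [one_pow] at this
    rw [← this, Real.sq_sqrt (Finset.sum_nonneg fun i _ => sq_nonneg _)]
  rw [← h1]
  exact Finset.sum_congr rfl fun i _ => by rw [Real.norm_eq_abs, sq_abs]

lemma sum_sq_norm_one {x : EuclideanSpace ℝ (Fin n)} (hx : (∑ i, x i ^ 2) = 1) :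
    ‖x‖ = 1 := by
  rw [EuclideanSpace.norm_eq]
  have : ∀ i : Fin n, ‖x i‖ ^ 2 = x i ^ 2 := fun i => by
    rw [Real.norm_eq_abs, sq_abs]
  rw [Finset.sum_congr rfl fun i _ => this i, hx, Real.sqrt_one]

lemma tendsto_log_div (m : ℕ) :
    Filter.Tendsto (fun k : ℕ => Real.log ((m * k : ℕ) + 1) / k)
      Filter.atTop (nhds 0) := by
  have hlogk : Filter.Tendsto (fun k : ℕ => Real.log k / k) Filter.atTop (nhds 0) := by
    have h := Real.isLittleO_log_id_atTop.tendsto_div_nhds_zero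
    exact h.comp tendsto_natCast_atTop_atTop
  have hconst : Filter.Tendsto (fun k : ℕ => Real.log (m + 1) / k) Filter.atTop (nhds 0) :=
    tendsto_const_div_atTop_nhds_zero_nat _
  have hsum : Filter.Tendsto (fun k : ℕ => Real.log (m + 1) / k + Real.log k / k)
      Filter.atTop (nhds 0) := by
    have := hconst.add hlogk
    simpa using this
  apply tendsto_of_tendsto_of_tendsto_of_le_of_le' tendsto_const_nhds hsum
  · filter_upwards [Filter.eventually_ge_atTop 1] with k hk
    apply div_nonneg _ (by positivity)
    apply Real.log_nonneg
    push_cast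
    have : (1:ℝ) ≤ k := by exact_mod_cast hk
    nlinarith [Nat.cast_nonneg (α := ℝ) m]
  · filter_upwards [Filter.eventually_ge_atTop 1] with k hk
    have hk1 : (1:ℝ) ≤ (k:ℝ) := by exact_mod_cast hk
    have hkpos : (0:ℝ) < k := by linarith
    have hle : ((m * k : ℕ) : ℝ) + 1 ≤ ((m:ℝ) + 1) * k := by
      push_cast
      nlinarith [Nat.cast_nonneg (α := ℝ) m]
    have hlog_le : Real.log (((m * k : ℕ) : ℝ) + 1) ≤ Real.log (((m:ℝ) + 1) * k) := by
      apply Real.log_le_log (by positivity) hle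
    have hsplit : Real.log (((m:ℝ) + 1) * k) = Real.log ((m:ℝ) + 1) + Real.log k := by
      rw [Real.log_mul (by positivity) (by positivity)]
    rw [← add_div, ← hsplit]
    exact div_le_div_of_nonneg_right hlog_le hkpos.le

lemma tendsto_eps (m nn : ℕ) :
    Filter.Tendsto (fun k : ℕ => (Real.sqrt ((((m * k : ℕ) : ℝ) + 1) ^ nn)) ^ ((1:ℝ)/k))
      Filter.atTop (nhds 1) := by
  have harg : Filter.Tendsto
      (fun k : ℕ => ((nn : ℝ) / 2) * (Real.log (((m * k : ℕ) : ℝ) + 1) / k))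
      Filter.atTop (nhds 0) := by
    have := (tendsto_log_div m).const_mul ((nn:ℝ)/2)
    simpa using this
  have hexp : Filter.Tendsto Real.exp (nhds 0) (nhds 1) := by
    have h := Real.continuous_exp.tendsto 0
    rwa [Real.exp_zero] at h
  have hmain := hexp.comp harg
  apply hmain.congr'
  filter_upwards [Filter.eventually_ge_atTop 1] with k hk
  have hk0 : (0:ℝ) < (k:ℝ) := by exact_mod_cast hk
  have hbase0 : (0:ℝ) < (((m * k : ℕ) : ℝ) + 1) ^ nn := by positivity
  have hbase : (0:ℝ) < Real.sqrt ((((m * k : ℕ) : ℝ) + 1) ^ nn) := Real.sqrt_pos.mpr hbase0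
  simp only [Function.comp_apply]
  rw [Real.rpow_def_of_pos hbase]
  congr 1
  rw [Real.log_sqrt hbase0.le, Real.log_pow]
  field_simp

end Rho1Aux

open Rho1Aux Filter

/-- If `f` is proportional to a power of an orthogonally
diagonalizable homogeneous polynomial `g` (i.e. `f = a g^m` with
`g(Qx) = ∑ λᵢ xᵢ^q` for some orthogonal `Q`), then
`ρ₁(f) = lim_k ‖f^k‖_HS^{1/k} = ‖f‖_σ`. -/
theorem rho_one_eq_sigmaNorm_of_diagonalizable {n p : ℕ}
    (f : MvPolynomial (Fin n) ℝ) (hf : f.IsHomogeneous p)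
    (hdiag : ∃ (q m : ℕ) (a : ℝ) (g : MvPolynomial (Fin n) ℝ)
      (Q : Matrix (Fin n) (Fin n) ℝ) (lam : Fin n → ℝ),
      0 < m ∧ g.IsHomogeneous q ∧ Q.transpose * Q = 1 ∧
      f = MvPolynomial.C a * g ^ m ∧
      ∀ x : Fin n → ℝ,
        MvPolynomial.eval (Q.mulVec x) g = ∑ i, lam i * x i ^ q) :
    Filter.Tendsto (fun k : ℕ => bombieriNorm (k * p) (f ^ k) ^ ((1 : ℝ) / k))
      Filter.atTop (nhds (sigmaNorm f)) := by
  classical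
  obtain ⟨q, m, a, g, Q, lam, hm, hg, hQ, hfa, heval⟩ := hdiag
  have hQQT : Q * Q.transpose = 1 := mul_eq_one_comm.mp hQ
  by_cases hf0 : f = 0
  · -- trivial case f = 0
    subst hf0
    have hsig : sigmaNorm (0 : MvPolynomial (Fin n) ℝ) = 0 := by
      rw [sigmaNorm]
      have hsub : { r | ∃ x : EuclideanSpace ℝ (Fin n), ‖x‖ = 1 ∧
          r = |MvPolynomial.eval (fun i => x i) (0 : MvPolynomial (Fin n) ℝ)| } ⊆ {0} := by
        rintro r ⟨x, hx, rfl⟩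
        simp
      rcases Set.eq_empty_or_nonempty { r | ∃ x : EuclideanSpace ℝ (Fin n), ‖x‖ = 1 ∧
          r = |MvPolynomial.eval (fun i => x i) (0 : MvPolynomial (Fin n) ℝ)| } with he | hne
      · rw [he, Real.sSup_empty]
      · rw [(hne.subset_singleton_iff).mp hsub]
        exact csSup_singleton 0
    rw [hsig]
    apply Filter.Tendsto.congr' _ (tendsto_const_nhds (x := (0:ℝ)))
    filter_upwards [Filter.eventually_ge_atTop 1] with k hk
    rw [zero_pow (by omega : k ≠ 0), bombieriNorm_zero,
      Real.zero_rpow (by positivity : (1:ℝ)/k ≠ 0)]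
  · -- f ≠ 0
    have ha : a ≠ 0 := fun h => hf0 (by rw [hfa, h, map_zero, zero_mul])
    have hgne : g ≠ 0 := fun h => hf0 (by rw [hfa, h, zero_pow hm.ne', mul_zero])
    have hn : 0 < n := by
      by_contra hn0
      have hn' : n = 0 := by omega
      apply hgne
      subst hn'
      apply MvPolynomial.funext
      intro y
      have h1 : MvPolynomial.eval y g = MvPolynomial.eval (Q.mulVec y) g := by
        have h0 : y = Q.mulVec y := funext fun i => i.elim0
        rw [← h0]
      rw [h1, heval y]
      simp
    have hgm : (g ^ m).IsHomogeneous (q * m) := hg.pow m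
    have hfa' : f.IsHomogeneous (q * m) := by
      rw [hfa]
      exact hgm.C_mul a
    have hp : p = q * m := hf.inj_right hfa' hf0
    have hDg : subQ Q g = ∑ i, MvPolynomial.C (lam i) * MvPolynomial.X i ^ q := by
      apply MvPolynomial.funext
      intro y
      rw [eval_subQ, heval, eval_diag]
    rcases Nat.eq_zero_or_pos q with hq0 | hqpos
    · -- q = 0, so p = 0, f is a nonzero constant
      have hp0 : p = 0 := by rw [hp, hq0, Nat.zero_mul]
      have hfC : f = MvPolynomial.C (MvPolynomial.constantCoeff f) := by
        apply MvPolynomial.ext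
        intro d
        rcases eq_or_ne d 0 with rfl | hd
        · rw [MvPolynomial.coeff_zero_C]
          rfl
        · have hps : d ∉ f.support := by
            intro hmem
            have hsum := sum_univ_eq_of_mem_support (hp0 ▸ hf) hmem
            apply hd
            ext i
            have : d i = 0 := by
              have := Finset.sum_eq_zero_iff.mp hsum i (Finset.mem_univ i)
              exact this
            simpa using this
          rw [MvPolynomial.notMem_support_iff.mp hps, MvPolynomial.coeff_C,
            if_neg (Ne.symm hd)]
      set c := MvPolynomial.constantCoeff f with hcdef
      have hc : c ≠ 0 := by
        intro h
        apply hf0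
        rw [hfC, h, map_zero]
      have hsig : sigmaNorm f = |c| := by
        rw [sigmaNorm]
        have hset : { r | ∃ x : EuclideanSpace ℝ (Fin n), ‖x‖ = 1 ∧
            r = |MvPolynomial.eval (fun i => x i) f| } = {|c|} := by
          ext r
          constructor
          · rintro ⟨x, hx, rfl⟩
            rw [hfC]
            simp
          · rintro rfl
            obtain ⟨x, hx⟩ := unit_sphere_exists hn
            exact ⟨x, hx, by rw [hfC]; simp⟩
        rw [hset]
        exact csSup_singleton _
      rw [hsig]
      apply Filter.Tendsto.congr' _ (tendsto_const_nhds (x := |c|))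
      filter_upwards [Filter.eventually_ge_atTop 1] with k hk
      have hk0 : (k:ℝ) ≠ 0 := by positivity
      have h1 : f ^ k = MvPolynomial.C (c ^ k) := by rw [hfC, ← map_pow]
      rw [h1, hp0, Nat.mul_zero, bombieriNorm_C, abs_pow]
      rw [← Real.rpow_natCast |c| k, ← Real.rpow_mul (abs_nonneg c),
        mul_one_div_cancel hk0, Real.rpow_one]
    · -- main case: q ≥ 1
      obtain ⟨SG, hSGnn, ⟨xw, hxw1, hxw2⟩, hbound⟩ := diag_package lam hqpos hn
      set A := |a| with hAdef
      set L := A * SG ^ m with hLdef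
      have hLnn : 0 ≤ L := mul_nonneg (abs_nonneg a) (pow_nonneg hSGnn m)
      set V := { r | ∃ x : EuclideanSpace ℝ (Fin n), ‖x‖ = 1 ∧
        r = |MvPolynomial.eval (fun i => x i) f| } with hVdef
      have hSV : sigmaNorm f = sSup V := rfl
      -- L is attained
      have hLmem : L ∈ V := by
        let y : EuclideanSpace ℝ (Fin n) := WithLp.toLp 2 (Q.mulVec xw)
        have hy1 : ‖y‖ = 1 := by
          apply sum_sq_norm_one
          have := sum_sq_mulVec hQ xw
          rw [show (∑ i, y i ^ 2) = ∑ i, (Q.mulVec xw i) ^ 2 from rfl, this, hxw1]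
        have hyg : MvPolynomial.eval (fun i => y i) g = ∑ i, lam i * xw i ^ q := by
          rw [show (fun i => y i) = Q.mulVec xw from rfl, heval]
      
        have hyf : |MvPolynomial.eval (fun i => y i) f| = L := by
          rw [hfa, map_mul, map_pow, MvPolynomial.eval_C, abs_mul, abs_pow, hyg]
          rw [hLdef, hAdef]
          congr 1
          rw [← hxw2, eval_diag]
        exact ⟨y, hy1, hyf.symm⟩
      have hVb : ∀ r ∈ V, r ≤ bombieriNorm p f := by
        rintro r ⟨x, hx, rfl⟩
        exact abs_eval_le_bombieri hf _ (norm_one_sum_sq hx)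
      have hVbdd : BddAbove V := ⟨bombieriNorm p f, fun r hr => hVb r hr⟩
      have hVne : V.Nonempty := ⟨L, hLmem⟩
      have hLleS : L ≤ sigmaNorm f := by
        rw [hSV]
        exact le_csSup hVbdd hLmem
      have hSnn : 0 ≤ sigmaNorm f := le_trans hLnn hLleS
      -- upper bound on the Bombieri norms
      have hBk : ∀ k : ℕ, bombieriNorm (k * p) (f ^ k)
          ≤ L ^ k * Real.sqrt ((((m * k : ℕ) : ℝ) + 1) ^ n) := by
        intro k
        have hkp : k * p = q * (m * k) := by rw [hp]; ring
        have hfacpos : (0:ℝ) < ((q * (m * k)).factorial : ℝ) := by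
          exact_mod_cast Nat.factorial_pos _
        have hfk : f ^ k = MvPolynomial.C (a ^ k) * g ^ (m * k) := by
          rw [hfa, mul_pow, ← map_pow, ← pow_mul]
        have hsubfk : subQ Q (f ^ k) = MvPolynomial.C (a ^ k)
            * (∑ i, MvPolynomial.C (lam i) * MvPolynomial.X i ^ q) ^ (m * k) := by
          rw [hfk, map_mul, subQ_C]
          congr 1
          rw [map_pow, hDg]
        have hpair : pairP (f ^ k) (f ^ k)
            = (a ^ k) * ((a ^ k) * pairP
                ((∑ i, MvPolynomial.C (lam i) * MvPolynomial.X i ^ q) ^ (m * k))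
                ((∑ i, MvPolynomial.C (lam i) * MvPolynomial.X i ^ q) ^ (m * k))) := by
          rw [← pairP_subQ Q hQQT (f ^ k) (f ^ k), hsubfk, pairP_C_mul_left, pairP_C_mul_right]
        have h2 : pairP (f ^ k) (f ^ k) / ((q * (m * k)).factorial : ℝ)
            ≤ (a ^ k) ^ 2 * ((((m * k : ℕ) : ℝ) + 1) ^ n * SG ^ (2 * (m * k))) := by
          rw [div_le_iff₀ hfacpos]
          calc pairP (f ^ k) (f ^ k)
              = (a ^ k) ^ 2 * pairP
                  ((∑ i, MvPolynomial.C (lam i) * MvPolynomial.X i ^ q) ^ (m * k))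
                  ((∑ i, MvPolynomial.C (lam i) * MvPolynomial.X i ^ q) ^ (m * k)) := by
                rw [hpair]; ring
            _ ≤ (a ^ k) ^ 2 * (((q * (m * k)).factorial : ℝ)
                  * (((m * k : ℕ) : ℝ) + 1) ^ n * SG ^ (2 * (m * k))) :=
                mul_le_mul_of_nonneg_left (by
                  have := hbound (m * k)
                  push_cast at this ⊢
                  convert this using 3 <;> norm_num) (sq_nonneg _)
            _ = (a ^ k) ^ 2 * ((((m * k : ℕ) : ℝ) + 1) ^ n * SG ^ (2 * (m * k)))
                  * ((q * (m * k)).factorial : ℝ) := by ring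
        rw [bombieriNorm_eq, hkp]
        calc Real.sqrt (pairP (f ^ k) (f ^ k) / ((q * (m * k)).factorial : ℝ))
            ≤ Real.sqrt ((a ^ k) ^ 2 * ((((m * k : ℕ) : ℝ) + 1) ^ n * SG ^ (2 * (m * k)))) :=
              Real.sqrt_le_sqrt h2
          _ = L ^ k * Real.sqrt ((((m * k : ℕ) : ℝ) + 1) ^ n) := by
              have hexp : (a ^ k) ^ 2 * ((((m * k : ℕ) : ℝ) + 1) ^ n * SG ^ (2 * (m * k)))
                  = (L ^ k) ^ 2 * (((m * k : ℕ) : ℝ) + 1) ^ n := by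
                have habs : (a ^ k) ^ 2 = (A ^ k) ^ 2 := by
                  rw [hAdef, ← abs_pow, sq_abs]
                rw [habs, hLdef]
                ring
              rw [hexp, Real.sqrt_mul (sq_nonneg _), Real.sqrt_sq (pow_nonneg hLnn k)]
      -- epsilon sequence
      have heps := tendsto_eps m n
      have hupper : Filter.Tendsto
          (fun k : ℕ => sigmaNorm f * (Real.sqrt ((((m * k : ℕ) : ℝ) + 1) ^ n)) ^ ((1:ℝ)/k))
          Filter.atTop (nhds (sigmaNorm f)) := by
        have := (tendsto_const_nhds (x := sigmaNorm f)).mul heps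
        simpa using this
      apply tendsto_of_tendsto_of_tendsto_of_le_of_le' (tendsto_const_nhds (x := sigmaNorm f))
        hupper
      · -- lower bound, eventually
        filter_upwards [Filter.eventually_ge_atTop 1] with k hk
        have hk0 : (k:ℝ) ≠ 0 := by positivity
        rw [hSV]
        apply csSup_le hVne
        rintro r ⟨x, hx, rfl⟩
        set r := |MvPolynomial.eval (fun i => x i) f| with hrdef
        have hrnn : (0:ℝ) ≤ r := abs_nonneg _
        have hfkhom : (f ^ k).IsHomogeneous (k * p) := by
          rw [mul_comm]
          exact hf.pow k
        have hrk : r ^ k ≤ bombieriNorm (k * p) (f ^ k) := by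
          have h1 : r ^ k = |MvPolynomial.eval (fun i => x i) (f ^ k)| := by
            rw [map_pow, abs_pow]
          rw [h1]
          exact abs_eval_le_bombieri hfkhom _ (norm_one_sum_sq hx)
        calc r = (r ^ k) ^ ((1:ℝ)/k) := by
              rw [← Real.rpow_natCast r k, ← Real.rpow_mul hrnn,
                mul_one_div_cancel hk0, Real.rpow_one]
          _ ≤ (bombieriNorm (k * p) (f ^ k)) ^ ((1:ℝ)/k) :=
              Real.rpow_le_rpow (pow_nonneg hrnn k) hrk (by positivity)
      · -- upper bound, eventually
        filter_upwards [Filter.eventually_ge_atTop 1] with k hk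
        have hk0 : (k:ℝ) ≠ 0 := by positivity
        have hCk : (0:ℝ) ≤ Real.sqrt ((((m * k : ℕ) : ℝ) + 1) ^ n) := Real.sqrt_nonneg _
        calc (bombieriNorm (k * p) (f ^ k)) ^ ((1:ℝ)/k)
            ≤ (L ^ k * Real.sqrt ((((m * k : ℕ) : ℝ) + 1) ^ n)) ^ ((1:ℝ)/k) :=
              Real.rpow_le_rpow (bombieriNorm_nonneg _ _) (hBk k) (by positivity)
          _ = L * (Real.sqrt ((((m * k : ℕ) : ℝ) + 1) ^ n)) ^ ((1:ℝ)/k) := by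
              rw [Real.mul_rpow (pow_nonneg hLnn k) hCk]
              congr 1
              rw [← Real.rpow_natCast L k, ← Real.rpow_mul hLnn,
                mul_one_div_cancel hk0, Real.rpow_one]
          _ ≤ sigmaNorm f * (Real.sqrt ((((m * k : ℕ) : ℝ) + 1) ^ n)) ^ ((1:ℝ)/k) :=
              mul_le_mul_of_nonneg_right hLleS (by positivity)
end

section
/- For nonnegative integers j_1,...,j_n with j_1+···+j_n = k and any integer q ≥ 2, the multinomial coefficients satisfy (k!/(j_1!···j_n!))² ≤ (k!/(j_1!···j_n!))^q ≤ (kq)!/((j_1 q)!···(j_n q)!). -/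
open scoped BigOperators

lemma choose_mul_choose_le_aux (a b c d : ℕ) :
    (a + b).choose a * (c + d).choose c ≤ (a + b + (c + d)).choose (a + c) := by
  conv_rhs => rw [Nat.add_choose_eq]
  exact Finset.single_le_sum (f := fun p : ℕ × ℕ => (a+b).choose p.1 * (c+d).choose p.2)
    (fun i _ => Nat.zero_le _) (a := (a, c)) (Finset.HasAntidiagonal.mem_antidiagonal.mpr rfl)

lemma multinomial_mul_le {α : Type*} (s : Finset α) (f g : α → ℕ) :
    Nat.multinomial s f * Nat.multinomial s g ≤ Nat.multinomial s (f + g) := by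
  induction s using Finset.cons_induction with
  | empty => simp
  | cons a s ha ih =>
    rw [Nat.multinomial_cons, Nat.multinomial_cons, Nat.multinomial_cons]
    calc (f a + ∑ i ∈ s, f i).choose (f a) * Nat.multinomial s f *
          ((g a + ∑ i ∈ s, g i).choose (g a) * Nat.multinomial s g)
        = (f a + ∑ i ∈ s, f i).choose (f a) * (g a + ∑ i ∈ s, g i).choose (g a) *
          (Nat.multinomial s f * Nat.multinomial s g) := by ring
      _ ≤ ((f a + ∑ i ∈ s, f i) + (g a + ∑ i ∈ s, g i)).choose (f a + g a) *
          Nat.multinomial s (f + g) :=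
        Nat.mul_le_mul (choose_mul_choose_le_aux _ _ _ _) ih
      _ = ((f + g) a + ∑ i ∈ s, (f + g) i).choose ((f + g) a) * Nat.multinomial s (f + g) := by
        congr 2
        simp [Finset.sum_add_distrib, Pi.add_apply]; ring

lemma multinomial_pow_le {n : ℕ} (j : Fin n → ℕ) (q : ℕ) :
    Nat.multinomial Finset.univ j ^ q ≤ Nat.multinomial Finset.univ (fun i => j i * q) := by
  induction q with
  | zero => simp [Nat.multinomial]
  | succ q ih =>
    have h1 : (fun i => j i * (q + 1)) = (fun i => j i * q) + j := by
      funext i; simp [Nat.mul_succ]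
    rw [pow_succ, h1]
    exact le_trans (Nat.mul_le_mul ih le_rfl)
      (multinomial_mul_le Finset.univ (fun i => j i * q) j)

/-- For nonnegative integers `j₁,…,jₙ` with `∑ jᵢ = k` and `q ≥ 2`:
`(k!/(j₁!⋯jₙ!))² ≤ (k!/(j₁!⋯jₙ!))^q ≤ (kq)!/((j₁q)!⋯(jₙq)!)`. -/
theorem multinomial_sq_le_pow_le {n k q : ℕ} (hq : 2 ≤ q)
    (j : Fin n → ℕ) (hj : ∑ i, j i = k) :
    Nat.multinomial Finset.univ j ^ 2 ≤ Nat.multinomial Finset.univ j ^ q ∧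
    Nat.multinomial Finset.univ j ^ q ≤ Nat.multinomial Finset.univ (fun i => j i * q) := by
  refine ⟨Nat.pow_le_pow_right (Nat.multinomial_pos _ _) hq, multinomial_pow_le j q⟩
end
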